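/- arXiv:0909.1097 — 4 statements merged into one kernel-verified Lean document; each statement's English description precedes it below -/
import Mathlib

section
/- Let μ be a compactly supported probability measure on ℝ with moments m_k = ∫ x^k dμ(x), let p, q ∈ ℝ[x], and define Q : ℝ[x] → ℝ[x] by Q[f] = p · L_μ[L_μ[f]] + q · L_μ[f]. If Q has a polynomial system of eigenfunctions, then deg q ≤ 1 and deg p ≤ 2, and writing p(x) = a + b x + c x² and q(x) = d + e x, the moments of μ satisfy, for every n ≥ 1, a Σ_{i=0}^{n−2} m_i m_{n−2−i} + b Σ_{i=0}^{n−1} m_i m_{n−1−i} + c Σ_{i=0}^{n} m_i m_{n−i} + d m_{n−1} + e m_n = 0 (empty sums are 0). -/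
open MeasureTheory Polynomial

/-- Moments of a measure on ℝ. -/
noncomputable def mom (ρ : Measure ℝ) (k : ℕ) : ℝ := ∫ x, x ^ k ∂ρ

/-- The operator `L_ρ` on polynomials, defined via the moment sequence `m` of `ρ`:
`L[x^n] = Σ_{k=0}^{n-1} m_{n-1-k} x^k`. -/
noncomputable def Lop (m : ℕ → ℝ) (f : Polynomial ℝ) : Polynomial ℝ :=
  f.sum fun n a => C a * ∑ k ∈ Finset.range n, C (m (n - 1 - k)) * X ^ k

/-- A measure has compact support. -/
def CompactSupp (μ : Measure ℝ) : Prop := ∃ K : Set ℝ, IsCompact K ∧ μ Kᶜ = 0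

/-- A polynomial system of eigenfunctions for an operator on polynomials. -/
def HasPolyEigenfunctions (Q : Polynomial ℝ → Polynomial ℝ) : Prop :=
  ∃ (P : ℕ → Polynomial ℝ) (lam : ℕ → ℝ),
    (∀ n, (P n).degree = (n : WithBot ℕ)) ∧ (∀ n, Q (P n) = lam n • P n)

lemma Lop_coeff (m : ℕ → ℝ) (f : Polynomial ℝ) (N t : ℕ) (h : f.natDegree < N) :
    (Lop m f).coeff t
      = ∑ n ∈ Finset.range N, f.coeff n * (if t < n then m (n - 1 - t) else 0) := by
  rw [Lop, Polynomial.sum_over_range' f (by simp) N h, Polynomial.finset_sum_coeff]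
  refine Finset.sum_congr rfl fun n _ => ?_
  rw [Polynomial.coeff_C_mul, Polynomial.finset_sum_coeff]
  congr 1
  have : ∀ k ∈ Finset.range n, (C (m (n - 1 - k)) * X ^ k).coeff t
      = if t = k then m (n - 1 - k) else 0 := by
    intro k _
    rw [Polynomial.coeff_C_mul, Polynomial.coeff_X_pow, mul_ite, mul_one, mul_zero]
  rw [Finset.sum_congr rfl this, Finset.sum_ite_eq (Finset.range n) t (fun k => m (n-1-k))]
  simp [Finset.mem_range]

lemma Lop_coeff_zero (m : ℕ → ℝ) (f : Polynomial ℝ) (t : ℕ) (h : f.natDegree ≤ t) :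
    (Lop m f).coeff t = 0 := by
  rw [Lop_coeff m f (f.natDegree + 1) t (Nat.lt_succ_self _)]
  refine Finset.sum_eq_zero fun n hn => ?_
  have : ¬ t < n := by simp only [Finset.mem_range] at hn; omega
  simp [this]

lemma Lop_natDegree_le (m : ℕ → ℝ) (f : Polynomial ℝ) :
    (Lop m f).natDegree ≤ f.natDegree :=
  Polynomial.natDegree_le_iff_coeff_eq_zero.mpr fun t ht =>
    Lop_coeff_zero m f t (le_of_lt ht)

lemma Lop_zero (m : ℕ → ℝ) : Lop m 0 = 0 := by simp [Lop]

lemma Lop_C (m : ℕ → ℝ) (r : ℝ) : Lop m (C r) = 0 := by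
  ext t
  rw [Lop_coeff m _ 1 t (by simp)]
  simp

lemma Lop_add (m : ℕ → ℝ) (f g : Polynomial ℝ) :
    Lop m (f + g) = Lop m f + Lop m g := by
  ext t
  set N := max f.natDegree g.natDegree + 1 with hN
  have hf : f.natDegree < N := by omega
  have hg : g.natDegree < N := by omega
  have hfg : (f + g).natDegree < N :=
    lt_of_le_of_lt (Polynomial.natDegree_add_le f g) (by omega)
  rw [Polynomial.coeff_add, Lop_coeff m _ N t hfg, Lop_coeff m f N t hf,
    Lop_coeff m g N t hg, ← Finset.sum_add_distrib]
  exact Finset.sum_congr rfl fun n _ => by rw [Polynomial.coeff_add]; ring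

lemma Lop_C_mul (m : ℕ → ℝ) (r : ℝ) (f : Polynomial ℝ) :
    Lop m (C r * f) = C r * Lop m f := by
  ext t
  have h1 : (C r * f).natDegree < f.natDegree + 1 :=
    lt_of_le_of_lt (Polynomial.natDegree_C_mul_le r f) (Nat.lt_succ_self _)
  rw [Polynomial.coeff_C_mul, Lop_coeff m _ (f.natDegree + 1) t h1,
    Lop_coeff m f (f.natDegree + 1) t (Nat.lt_succ_self _), Finset.mul_sum]
  exact Finset.sum_congr rfl fun n _ => by rw [Polynomial.coeff_C_mul]; ring

lemma Lop_sum (m : ℕ → ℝ) {α : Type*} (s : Finset α) (f : α → Polynomial ℝ) :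
    Lop m (∑ i ∈ s, f i) = ∑ i ∈ s, Lop m (f i) := by
  classical
  induction s using Finset.induction_on with
  | empty => simp [Lop_zero]
  | insert a s h ih => rw [Finset.sum_insert h, Lop_add, ih, Finset.sum_insert h]

lemma Lop_pow_coeff (m : ℕ → ℝ) (k t : ℕ) :
    (Lop m (X ^ k)).coeff t = if t < k then m (k - 1 - t) else 0 := by
  rw [Lop_coeff m _ (k + 1) t (by simp [Polynomial.natDegree_X_pow])]
  have : ∀ n ∈ Finset.range (k+1), (X ^ k : Polynomial ℝ).coeff n * (if t < n then m (n - 1 - t) else 0)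
      = if n = k then (if t < n then m (n - 1 - t) else 0) else 0 := by
    intro n _
    rw [Polynomial.coeff_X_pow, ite_mul, one_mul, zero_mul]
  rw [Finset.sum_congr rfl this, Finset.sum_ite_eq' (Finset.range (k+1)) k]
  simp

lemma Lop_pow_natDegree_lt (m : ℕ → ℝ) (k : ℕ) (hk : 1 ≤ k) :
    (Lop m (X ^ k)).natDegree < k := by
  have : (Lop m (X ^ k)).natDegree ≤ k - 1 := by
    refine Polynomial.natDegree_le_iff_coeff_eq_zero.mpr fun t ht => ?_
    rw [Lop_pow_coeff]
    have : ¬ t < k := by omega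
    simp [this]
  omega

lemma Lop2_pow_coeff (m : ℕ → ℝ) (k t : ℕ) (hk : 1 ≤ k) :
    (Lop m (Lop m (X ^ k))).coeff t
      = ∑ i ∈ Finset.range (k - 1 - t), m i * m (k - 2 - t - i) := by
  rw [Lop_coeff m _ k t (Lop_pow_natDegree_lt m k hk)]
  have h1 : ∀ n ∈ Finset.range k,
      (Lop m (X ^ k)).coeff n * (if t < n then m (n - 1 - t) else 0)
      = if t < n then m (k - 1 - n) * m (n - 1 - t) else 0 := by
    intro n hn
    rw [Lop_pow_coeff, if_pos (Finset.mem_range.mp hn), mul_ite, mul_zero]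
  rw [Finset.sum_congr rfl h1, ← Finset.sum_filter]
  have h2 : (Finset.range k).filter (fun n => t < n) = Finset.Ico (t+1) k := by
    ext n; simp [Finset.mem_Ico, Finset.mem_filter]; omega
  rw [h2, Finset.sum_Ico_eq_sum_range]
  have h3 : k - (t + 1) = k - 1 - t := by omega
  rw [h3]
  refine Finset.sum_congr rfl fun i hi => ?_
  have hi' : i < k - 1 - t := Finset.mem_range.mp hi
  have e1 : k - 1 - (t + 1 + i) = k - 2 - t - i := by omega
  have e2 : t + 1 + i - 1 - t = i := by omega
  rw [e1, e2, mul_comm]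

lemma coeff_comb (a b c d e : ℝ) (g h : Polynomial ℝ) (t : ℕ) :
    ((C a + C b * X + C c * X ^ 2) * g + (C d + C e * X) * h).coeff (t + 2)
      = a * g.coeff (t + 2) + b * g.coeff (t + 1) + c * g.coeff t
        + d * h.coeff (t + 2) + e * h.coeff (t + 1) := by
  have hX : ∀ (f : Polynomial ℝ) (s : ℕ), (C b * X * f).coeff (s + 1) = b * f.coeff s := by
    intro f s
    rw [mul_assoc, Polynomial.coeff_C_mul, Polynomial.coeff_X_mul]
  have hX2 : (C c * X ^ 2 * g).coeff (t + 2) = c * g.coeff t := by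
    rw [mul_assoc, Polynomial.coeff_C_mul, Polynomial.coeff_X_pow_mul]
  have hXe : (C e * X * h).coeff (t + 2) = e * h.coeff (t + 1) := by
    have := hX h (t + 1)
    rw [mul_assoc, Polynomial.coeff_C_mul] at this ⊢
    rw [show t + 2 = (t + 1) + 1 from rfl, Polynomial.coeff_X_mul]
  simp only [add_mul, Polynomial.coeff_add, Polynomial.coeff_C_mul, hX2, hXe]
  rw [show t + 2 = (t + 1) + 1 from rfl, mul_assoc, Polynomial.coeff_C_mul,
    Polynomial.coeff_X_mul]
  ring

lemma Qpow_coeff (m : ℕ → ℝ) (a b c d e : ℝ) (k t : ℕ) :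
    ((C a + C b * X + C c * X ^ 2) * Lop m (Lop m (X ^ k))
        + (C d + C e * X) * Lop m (X ^ k)).coeff (t + 2)
      = a * (∑ i ∈ Finset.range (k - 3 - t), m i * m (k - 4 - t - i))
        + b * (∑ i ∈ Finset.range (k - 2 - t), m i * m (k - 3 - t - i))
        + c * (∑ i ∈ Finset.range (k - 1 - t), m i * m (k - 2 - t - i))
        + d * (if t + 2 < k then m (k - 3 - t) else 0)
        + e * (if t + 1 < k then m (k - 2 - t) else 0) := by
  rcases Nat.eq_zero_or_pos k with hk | hk
  · subst hk
    rw [show (X ^ 0 : Polynomial ℝ) = C 1 by simp, Lop_C, Lop_zero]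
    simp
  rw [coeff_comb, Lop2_pow_coeff m k (t+2) hk, Lop2_pow_coeff m k (t+1) hk,
    Lop2_pow_coeff m k t hk, Lop_pow_coeff, Lop_pow_coeff]
  have e1 : k - 1 - (t + 2) = k - 3 - t := by omega
  have e2 : k - 1 - (t + 1) = k - 2 - t := by omega
  have e3 : ∀ i, k - 2 - (t + 2) - i = k - 4 - t - i := fun i => by omega
  have e4 : ∀ i, k - 2 - (t + 1) - i = k - 3 - t - i := fun i => by omega
  rw [e1, e2]
  have s3 : ∑ i ∈ Finset.range (k - 3 - t), m i * m (k - 2 - (t + 2) - i)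
      = ∑ i ∈ Finset.range (k - 3 - t), m i * m (k - 4 - t - i) :=
    Finset.sum_congr rfl fun i _ => by rw [e3 i]
  have s4 : ∑ i ∈ Finset.range (k - 2 - t), m i * m (k - 2 - (t + 1) - i)
      = ∑ i ∈ Finset.range (k - 2 - t), m i * m (k - 3 - t - i) :=
    Finset.sum_congr rfl fun i _ => by rw [e4 i]
  rw [s3, s4]

theorem stmt0 (μ : Measure ℝ) [IsProbabilityMeasure μ] (hcs : CompactSupp μ)
    (p q : Polynomial ℝ)
    (hQ : HasPolyEigenfunctions
      (fun f => p * Lop (mom μ) (Lop (mom μ) f) + q * Lop (mom μ) f)) :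
    q.degree ≤ 1 ∧ p.degree ≤ 2 ∧
    ∀ n : ℕ, 1 ≤ n →
      p.coeff 0 * (∑ i ∈ Finset.range (n - 1), mom μ i * mom μ (n - 2 - i))
      + p.coeff 1 * (∑ i ∈ Finset.range n, mom μ i * mom μ (n - 1 - i))
      + p.coeff 2 * (∑ i ∈ Finset.range (n + 1), mom μ i * mom μ (n - i))
      + q.coeff 0 * mom μ (n - 1) + q.coeff 1 * mom μ n = 0 := by
  obtain ⟨P, lam, hdeg, heig0⟩ := hQ
  set m : ℕ → ℝ := mom μ with hm
  have heig : ∀ n, p * Lop m (Lop m (P n)) + q * Lop m (P n) = lam n • P n := by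
    intro n; exact heig0 n
  have hm0 : m 0 = 1 := by
    simp [hm, mom]
  have hPne : ∀ n, P n ≠ 0 := by
    intro n h
    have := hdeg n
    rw [h, Polynomial.degree_zero] at this
    exact (by simp : (⊥ : WithBot ℕ) ≠ (n : WithBot ℕ)) this
  have hPnat : ∀ n, (P n).natDegree = n := fun n =>
    Polynomial.natDegree_eq_of_degree_eq_some (hdeg n)
  have hPlead : ∀ n, (P n).coeff n ≠ 0 := by
    intro n
    have := Polynomial.leadingCoeff_ne_zero.mpr (hPne n)
    rwa [Polynomial.leadingCoeff, hPnat n] at this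
  -- Part 1 : degree q ≤ 1
  have hLP1 : Lop m (P 1) = C ((P 1).coeff 1) := by
    ext t
    rw [Lop_coeff m (P 1) 2 t (by rw [hPnat]; omega)]
    rw [Finset.sum_range_succ, Finset.sum_range_succ, Finset.sum_range_zero]
    rcases t with _ | t
    · simp [hm0, Polynomial.coeff_C]
    · simp [Polynomial.coeff_C]
  have hQ1 : q * C ((P 1).coeff 1) = lam 1 • P 1 := by
    have := heig 1
    rwa [hLP1, Lop_C, mul_zero, zero_add] at this
  have hq1 : q.degree ≤ 1 := by
    have h1 : (q * C ((P 1).coeff 1)).degree = q.degree := by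
      rw [Polynomial.degree_mul, Polynomial.degree_C (hPlead 1), add_zero]
    calc q.degree = (lam 1 • P 1).degree := by rw [← h1, hQ1]
      _ ≤ (P 1).degree := Polynomial.degree_smul_le _ _
      _ = 1 := by rw [hdeg 1]; rfl
  -- Part 2 : degree p ≤ 2
  have hLP2nd : ∀ t, 2 ≤ t → (Lop m (P 2)).coeff t = 0 := by
    intro t ht
    exact Lop_coeff_zero m (P 2) t (by rw [hPnat]; omega)
  have hLP2deg : (Lop m (P 2)).degree ≤ 1 := by
    refine Polynomial.degree_le_iff_coeff_zero _ _ |>.mpr fun t ht => ?_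
    have : 2 ≤ t := by exact_mod_cast Nat.one_lt_cast.mp ht
    exact hLP2nd t this
  have hL2P2 : Lop m (Lop m (P 2)) = C ((P 2).coeff 2) := by
    ext t
    have hnd : (Lop m (P 2)).natDegree < 3 := by
      have := Lop_natDegree_le m (P 2); rw [hPnat] at this; omega
    rw [Lop_coeff m _ 3 t hnd]
    rw [Finset.sum_range_succ, Finset.sum_range_succ, Finset.sum_range_succ,
      Finset.sum_range_zero]
    have hc1 : (Lop m (P 2)).coeff 1 = (P 2).coeff 2 := by
      rw [Lop_coeff m (P 2) 3 1 (by rw [hPnat]; omega)]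
      rw [Finset.sum_range_succ, Finset.sum_range_succ, Finset.sum_range_succ,
        Finset.sum_range_zero]
      norm_num [hm0]
    have hc2 : (Lop m (P 2)).coeff 2 = 0 := hLP2nd 2 le_rfl
    rcases t with _ | _ | t
    · simp [hc1, hc2, hm0, Polynomial.coeff_C]
    · simp [hc2, Polynomial.coeff_C]
    · simp [Polynomial.coeff_C]
  have hQ2 : p * C ((P 2).coeff 2) = lam 2 • P 2 - q * Lop m (P 2) := by
    have := heig 2
    rw [hL2P2] at this
    linear_combination (norm := ring_nf) this
  have hp2 : p.degree ≤ 2 := by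
    have h1 : (p * C ((P 2).coeff 2)).degree = p.degree := by
      rw [Polynomial.degree_mul, Polynomial.degree_C (hPlead 2), add_zero]
    have h2 : (lam 2 • P 2 - q * Lop m (P 2)).degree ≤ 2 := by
      refine le_trans (Polynomial.degree_sub_le _ _) (max_le ?_ ?_)
      · exact le_trans (Polynomial.degree_smul_le _ _) (by rw [hdeg 2]; rfl)
      · refine le_trans (Polynomial.degree_mul_le _ _) ?_
        calc q.degree + (Lop m (P 2)).degree ≤ 1 + 1 := add_le_add hq1 hLP2deg
          _ = 2 := by rfl
    rw [← h1, hQ2]; exact h2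
  refine ⟨hq1, hp2, ?_⟩
  -- Part 3
  set a := p.coeff 0 with ha
  set b := p.coeff 1 with hb
  set c := p.coeff 2 with hc
  set d := q.coeff 0 with hd
  set e := q.coeff 1 with he
  have hpd : p = C a + C b * X + C c * X ^ 2 := by
    ext t
    rcases t with _ | _ | _ | t
    · simp [Polynomial.coeff_C] <;> rfl
    · simp [Polynomial.coeff_C, Polynomial.coeff_X, Polynomial.coeff_X_pow] <;> rfl
    · simp [Polynomial.coeff_C, Polynomial.coeff_X, Polynomial.coeff_X_pow] <;> rfl
    · have h1 : p.coeff (t + 3) = 0 := by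
        refine Polynomial.coeff_eq_zero_of_degree_lt (lt_of_le_of_lt hp2 ?_)
        exact_mod_cast (by omega : 2 < t + 3)
      simp [h1, Polynomial.coeff_C, Polynomial.coeff_X, Polynomial.coeff_X_pow]
  have hqd : q = C d + C e * X := by
    ext t
    rcases t with _ | _ | t
    · simp [Polynomial.coeff_C] <;> rfl
    · simp [Polynomial.coeff_C, Polynomial.coeff_X] <;> rfl
    · have h1 : q.coeff (t + 2) = 0 := by
        refine Polynomial.coeff_eq_zero_of_degree_lt (lt_of_le_of_lt hq1 ?_)
        exact_mod_cast (by omega : 1 < t + 2)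
      simp [h1, Polynomial.coeff_C, Polynomial.coeff_X]
  -- value of (Q X^k).coeff (t+2)
  have hQpow : ∀ k t : ℕ,
      (p * Lop m (Lop m (X ^ k)) + q * Lop m (X ^ k)).coeff (t + 2)
      = a * (∑ i ∈ Finset.range (k - 3 - t), m i * m (k - 4 - t - i))
        + b * (∑ i ∈ Finset.range (k - 2 - t), m i * m (k - 3 - t - i))
        + c * (∑ i ∈ Finset.range (k - 1 - t), m i * m (k - 2 - t - i))
        + d * (if t + 2 < k then m (k - 3 - t) else 0)
        + e * (if t + 1 < k then m (k - 2 - t) else 0) := by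
    intro k t
    conv_lhs => rw [hpd, hqd]
    exact Qpow_coeff m a b c d e k t
  -- upper-triangularity
  have hupper : ∀ k t : ℕ, k < t + 2 →
      (p * Lop m (Lop m (X ^ k)) + q * Lop m (X ^ k)).coeff (t + 2) = 0 := by
    intro k t hkt
    rw [hQpow k t]
    have e1 : k - 3 - t = 0 := by omega
    have e2 : k - 2 - t = 0 := by omega
    have e3 : k - 1 - t = 0 := by omega
    have e4 : ¬ (t + 2 < k) := by omega
    have e5 : ¬ (t + 1 < k) := by omega
    rw [e1, e2, e3]
    simp [e4, e5]
  -- diagonal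
  have hdiag : ∀ t : ℕ,
      (p * Lop m (Lop m (X ^ (t + 2))) + q * Lop m (X ^ (t + 2))).coeff (t + 2)
        = c + e := by
    intro t
    rw [hQpow (t + 2) t]
    have e1 : t + 2 - 3 - t = 0 := by omega
    have e2 : t + 2 - 2 - t = 0 := by omega
    have e3 : t + 2 - 1 - t = 1 := by omega
    rw [e1, e2, e3]
    have e4 : ¬ (t + 2 < t + 2) := by omega
    have e5 : t + 1 < t + 2 := by omega
    simp [e4, e5, hm0]
  -- the quantity to kill
  set S : ℕ → ℝ := fun s =>
      a * (∑ i ∈ Finset.range (s - 1), m i * m (s - 2 - i))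
      + b * (∑ i ∈ Finset.range s, m i * m (s - 1 - i))
      + c * (∑ i ∈ Finset.range (s + 1), m i * m (s - i))
      + d * m (s - 1) + e * m s with hS
  have hQS : ∀ s : ℕ, 1 ≤ s →
      (p * Lop m (Lop m (X ^ (s + 2))) + q * Lop m (X ^ (s + 2))).coeff 2 = S s := by
    intro s hs
    have := hQpow (s + 2) 0
    rw [show (0:ℕ) + 2 = 2 from rfl] at this
    rw [this, hS]
    have e1 : s + 2 - 3 - 0 = s - 1 := by omega
    have e2 : s + 2 - 2 - 0 = s := by omega
    have e3 : s + 2 - 1 - 0 = s + 1 := by omega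
    have e4 : (0:ℕ) + 2 < s + 2 := by omega
    have e5 : (0:ℕ) + 1 < s + 2 := by omega
    rw [e1, e2, e3, if_pos e4, if_pos e5]
    have f1 : ∀ i, s + 2 - 4 - 0 - i = s - 2 - i := fun i => by omega
    have s1 : ∑ i ∈ Finset.range (s - 1), m i * m (s + 2 - 4 - 0 - i)
        = ∑ i ∈ Finset.range (s - 1), m i * m (s - 2 - i) :=
      Finset.sum_congr rfl fun i _ => by rw [f1 i]
    rw [s1]
  -- expansion of (Q (P n)).coeff j as a sum over monomials
  have hQPcoeff : ∀ n j : ℕ,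
      (p * Lop m (Lop m (P n)) + q * Lop m (P n)).coeff j
      = ∑ k ∈ Finset.range (n + 1), (P n).coeff k *
          ((p * Lop m (Lop m (X ^ k)) + q * Lop m (X ^ k)).coeff j) := by
    intro n j
    have hdecomp : P n = ∑ k ∈ Finset.range (n + 1), C ((P n).coeff k) * X ^ k := by
      conv_lhs => rw [Polynomial.as_sum_range' (P n) (n + 1) (by rw [hPnat]; omega)]
      exact Finset.sum_congr rfl fun k _ => (Polynomial.C_mul_X_pow_eq_monomial).symm
    conv_lhs => rw [hdecomp]
    rw [Lop_sum]
    rw [Finset.sum_congr rfl fun k _ => Lop_C_mul m ((P n).coeff k) (X ^ k)]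
    rw [Lop_sum]
    rw [Finset.sum_congr rfl fun k _ => Lop_C_mul m ((P n).coeff k) (Lop m (X ^ k))]
    rw [Finset.mul_sum, Finset.mul_sum, ← Finset.sum_add_distrib,
      Polynomial.finset_sum_coeff]
    refine Finset.sum_congr rfl fun k _ => ?_
    rw [Polynomial.coeff_add]
    have r1 : p * (C ((P n).coeff k) * Lop m (Lop m (X ^ k)))
        = C ((P n).coeff k) * (p * Lop m (Lop m (X ^ k))) := by ring
    have r2 : q * (C ((P n).coeff k) * Lop m (X ^ k))
        = C ((P n).coeff k) * (q * Lop m (X ^ k)) := by ring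
    rw [r1, r2, Polynomial.coeff_C_mul, Polynomial.coeff_C_mul,
      Polynomial.coeff_add, mul_add]
  -- eigenvalue identification
  have hlam : ∀ t : ℕ, lam (t + 2) = c + e := by
    intro t
    have h1 := congrArg (fun f => f.coeff (t + 2)) (heig (t + 2))
    simp only [Polynomial.coeff_smul, smul_eq_mul] at h1
    rw [hQPcoeff (t + 2) (t + 2)] at h1
    rw [Finset.sum_range_succ, hdiag t] at h1
    have h2 : ∑ k ∈ Finset.range (t + 2), (P (t + 2)).coeff k *
          ((p * Lop m (Lop m (X ^ k)) + q * Lop m (X ^ k)).coeff (t + 2))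
        = 0 := by
      refine Finset.sum_eq_zero fun k hk => ?_
      have hk' : k < t + 2 := Finset.mem_range.mp hk
      rw [hupper k t hk', mul_zero]
    rw [h2, zero_add] at h1
    have h3 : (P (t + 2)).coeff (t + 2) * (c + e)
        = (P (t + 2)).coeff (t + 2) * lam (t + 2) := by
      rw [h1]; ring
    exact (mul_left_cancel₀ (hPlead (t + 2)) h3).symm
  -- main induction : S s = 0 for all s ≥ 1
  have hSzero : ∀ s : ℕ, 1 ≤ s → S s = 0 := by
    intro s
    induction s using Nat.strong_induction_on with
    | _ s ih =>
      intro hs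
      have h1 := congrArg (fun f => f.coeff 2) (heig (s + 2))
      simp only [Polynomial.coeff_smul, smul_eq_mul] at h1
      rw [hQPcoeff (s + 2) 2, hlam s] at h1
      rw [show s + 2 + 1 = s + 3 from rfl, Finset.sum_range_succ] at h1
      have hd2 : (p * Lop m (Lop m (X ^ 2)) + q * Lop m (X ^ 2)).coeff 2 = c + e := by
        have := hdiag 0
        norm_num [Polynomial.coeff_add] at this ⊢
        exact this
      have h2mem : (2 : ℕ) ∈ Finset.range (s + 2) := by
        simp only [Finset.mem_range]; omega
      have hmid : ∑ k ∈ Finset.range (s + 2), (P (s + 2)).coeff k *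
            ((p * Lop m (Lop m (X ^ k)) + q * Lop m (X ^ k)).coeff 2)
          = (P (s + 2)).coeff 2 * (c + e) := by
        rw [← hd2]
        refine Finset.sum_eq_single_of_mem 2 h2mem fun k hk hne => ?_
        rcases lt_or_gt_of_ne hne with hlt | hgt
        · rw [show (2:ℕ) = 0 + 2 from rfl] at hlt ⊢
          rw [hupper k 0 hlt, mul_zero]
        · have hk3 : 3 ≤ k := by omega
          have hk' : k = (k - 2) + 2 := by omega
          have h0 : (p * Lop m (Lop m (X ^ k)) + q * Lop m (X ^ k)).coeff 2
              = S (k - 2) := by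
            rw [hk']; exact hQS (k - 2) (by omega)
          rw [h0, ih (k - 2) (by have := Finset.mem_range.mp hk; omega) (by omega),
            mul_zero]
      have hlast : (p * Lop m (Lop m (X ^ (s + 2))) + q * Lop m (X ^ (s + 2))).coeff 2
          = S s := hQS s hs
      rw [hmid, hlast] at h1
      have : (P (s + 2)).coeff (s + 2) * S s = 0 := by linarith [h1]
      exact (mul_eq_zero.mp this).resolve_left (hPlead (s + 2))
  intro n hn
  have := hSzero n hn
  rw [hS] at this
  exact this
end

section
/- Let μ be a compactly supported probability measure on ℝ and let H ∈ L¹(μ) be a conjugate variable for μ, i.e. for every polynomial f ∈ ℝ[x], ∬ ∂f(x, y) dμ(x) dμ(y) = ∫ H f dμ. Then the operator A[f] = L_μ[f] − (1/2) H f is antisymmetric with respect to μ on polynomials: for all f, g ∈ ℝ[x], ∫ (L_μ[f] − (1/2) H f) g dμ = − ∫ f (L_μ[g] − (1/2) H g) dμ (so that i·A is symmetric). -/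
open MeasureTheory Polynomial

/-- The difference quotient `∂h(x,y)` of a polynomial, with `(∂h)(x,x) = h'(x)`. -/
noncomputable def pdq (h : Polynomial ℝ) (x y : ℝ) : ℝ :=
  if x = y then (Polynomial.derivative h).eval x else (h.eval x - h.eval y) / (x - y)

noncomputable def dqfun (f : Polynomial ℝ) (x y : ℝ) : ℝ :=
  f.sum fun n a => a * ∑ k ∈ Finset.range n, x ^ k * y ^ (n - 1 - k)

lemma dqfun_add (f g : Polynomial ℝ) (x y : ℝ) :
    dqfun (f + g) x y = dqfun f x y + dqfun g x y := by
  unfold dqfun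
  apply Polynomial.sum_add_index <;> intros <;> simp [add_mul]

lemma dqfun_monomial (n : ℕ) (a x y : ℝ) :
    dqfun (monomial n a) x y = a * ∑ k ∈ Finset.range n, x ^ k * y ^ (n - 1 - k) := by
  unfold dqfun
  exact Polynomial.sum_monomial_index a _ (by simp)

lemma pdq_eq (f : Polynomial ℝ) (x y : ℝ) : pdq f x y = dqfun f x y := by
  induction f using Polynomial.induction_on' with
  | add p q hp hq =>
    rw [dqfun_add, ← hp, ← hq]
    unfold pdq
    by_cases h : x = y
    · simp [h]
    · simp only [if_neg h, eval_add]
      ring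
  | monomial n a =>
    rw [dqfun_monomial]
    unfold pdq
    by_cases h : x = y
    · subst h
      simp only [if_true, derivative_monomial, eval_monomial]
      have : ∀ k ∈ Finset.range n, x ^ k * x ^ (n - 1 - k) = x ^ (n - 1) := by
        intro k hk
        rw [← pow_add]
        congr 1
        have := Finset.mem_range.mp hk
        omega
      rw [Finset.sum_congr rfl this]
      simp [Finset.sum_const]
      ring
    · rw [if_neg h]
      have hxy : x - y ≠ 0 := sub_ne_zero.mpr h
      rw [div_eq_iff hxy, mul_assoc, geom_sum₂_mul]
      simp [eval_monomial, mul_sub]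

lemma dqfun_symm (f : Polynomial ℝ) (x y : ℝ) : dqfun f x y = dqfun f y x := by
  unfold dqfun
  congr 1
  funext n a
  congr 1
  conv_rhs => rw [← Finset.sum_range_reflect]
  apply Finset.sum_congr rfl
  intro k hk
  have hkn := Finset.mem_range.mp hk
  have h1 : n - 1 - (n - 1 - k) = k := by omega
  rw [h1, mul_comm]

lemma pdq_mul (f g : Polynomial ℝ) (x y : ℝ) :
    pdq (f * g) x y = pdq f x y * g.eval x + f.eval y * pdq g x y := by
  unfold pdq
  by_cases h : x = y
  · subst h
    simp only [if_pos rfl, derivative_mul, eval_add, eval_mul, if_true]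
  · have hxy : x - y ≠ 0 := sub_ne_zero.mpr h
    simp only [if_neg h, eval_mul]
    field_simp
    ring

lemma continuous_dqfun (f : Polynomial ℝ) :
    Continuous (fun p : ℝ × ℝ => dqfun f p.1 p.2) := by
  unfold dqfun
  simp only [Polynomial.sum_def]
  apply continuous_finset_sum
  intro n _
  apply Continuous.mul continuous_const
  apply continuous_finset_sum
  intro k _
  exact ((continuous_fst.pow k).mul (continuous_snd.pow _))

lemma Lop_eval (m : ℕ → ℝ) (f : Polynomial ℝ) (x : ℝ) :
    (Lop m f).eval x = ∑ n ∈ f.support, f.coeff n * ∑ k ∈ Finset.range n, m (n - 1 - k) * x ^ k := by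
  unfold Lop
  rw [Polynomial.sum_def, Polynomial.eval_finset_sum]
  simp [Polynomial.eval_finset_sum]

lemma integrable_cont {α : Type*} [MeasurableSpace α] [TopologicalSpace α]
    [OpensMeasurableSpace α] {μ : Measure α} [IsFiniteMeasure μ] {K : Set α}
    (hK : IsCompact K) (h0 : μ Kᶜ = 0) {φ : α → ℝ} (hφ : Continuous φ) :
    Integrable φ μ := by
  obtain ⟨C, hC⟩ := hK.exists_bound_of_continuousOn hφ.continuousOn
  refine Integrable.mono' (integrable_const C) hφ.aestronglyMeasurable ?_
  have hae : ∀ᵐ x ∂μ, x ∈ K := by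
    rw [ae_iff]
    simpa [Set.compl_def] using h0
  filter_upwards [hae] with x hx using hC x hx

theorem stmt8 (μ : Measure ℝ) [IsProbabilityMeasure μ] (hcs : CompactSupp μ)
    (H : ℝ → ℝ) (hH : Integrable H μ)
    (hconj : ∀ f : Polynomial ℝ,
      ∫ x, (∫ y, pdq f x y ∂μ) ∂μ = ∫ x, H x * f.eval x ∂μ) :
    ∀ f g : Polynomial ℝ,
      ∫ x, ((Lop (mom μ) f).eval x - (1 / 2) * H x * f.eval x) * g.eval x ∂μ
        = -∫ x, f.eval x * ((Lop (mom μ) g).eval x - (1 / 2) * H x * g.eval x) ∂μ := by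
  obtain ⟨K, hK, hK0⟩ := hcs
  have haeK : ∀ᵐ x ∂μ, x ∈ K := by
    rw [ae_iff]; simpa [Set.compl_def] using hK0
  have intc : ∀ φ : ℝ → ℝ, Continuous φ → Integrable φ μ :=
    fun φ hφ => integrable_cont hK hK0 hφ
  have hprod0 : (μ.prod μ) ((K ×ˢ K)ᶜ) = 0 := by
    rw [Set.compl_prod_eq_union]
    refine measure_union_null ?_ ?_ <;> rw [Measure.prod_prod] <;> simp [hK0]
  have intcp : ∀ φ : ℝ × ℝ → ℝ, Continuous φ → Integrable φ (μ.prod μ) :=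
    fun φ hφ => integrable_cont (hK.prod hK) hprod0 hφ
  have intHp : ∀ p : Polynomial ℝ, Integrable (fun x => H x * p.eval x) μ := by
    intro p
    obtain ⟨C, hC⟩ := hK.exists_bound_of_continuousOn (p.continuous).continuousOn
    refine Integrable.mono' (hH.norm.const_mul C)
      (hH.aestronglyMeasurable.mul p.continuous.aestronglyMeasurable) ?_
    filter_upwards [haeK] with x hx
    rw [norm_mul, mul_comm]
    exact mul_le_mul_of_nonneg_right (hC x hx) (norm_nonneg _)
  have hLeval : ∀ (p : Polynomial ℝ) (x : ℝ),
      ∫ y, dqfun p x y ∂μ = (Lop (mom μ) p).eval x := by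
    intro p x
    rw [Lop_eval]
    unfold dqfun
    simp only [Polynomial.sum_def]
    rw [integral_finset_sum _ (fun n _ =>
      (intc _ (by continuity)).const_mul (p.coeff n))]
    refine Finset.sum_congr rfl fun n _ => ?_
    rw [integral_const_mul _ _]
    congr 1
    rw [integral_finset_sum _ (fun k _ => (intc _ (by continuity)).const_mul (x ^ k))]
    refine Finset.sum_congr rfl fun k _ => ?_
    rw [integral_const_mul _ _, mul_comm]
    rfl
  intro f g
  have key : (∫ x, (Lop (mom μ) f).eval x * g.eval x ∂μ)
      + (∫ x, f.eval x * (Lop (mom μ) g).eval x ∂μ) = ∫ x, H x * (f * g).eval x ∂μ := by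
    have h1 := hconj (f * g)
    simp only [pdq_mul] at h1
    simp only [pdq_eq] at h1
    have hF1 : Integrable (Function.uncurry fun x y => dqfun f x y * g.eval x) (μ.prod μ) :=
      intcp _ ((continuous_dqfun f).mul (g.continuous.comp continuous_fst))
    have hF2 : Integrable (Function.uncurry fun x y => f.eval y * dqfun g x y) (μ.prod μ) :=
      intcp _ ((f.continuous.comp continuous_snd).mul (continuous_dqfun g))
    have hsplit : ∫ x, (∫ y, (dqfun f x y * g.eval x + f.eval y * dqfun g x y) ∂μ) ∂μ
        = (∫ x, (∫ y, dqfun f x y * g.eval x ∂μ) ∂μ)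
          + (∫ x, (∫ y, f.eval y * dqfun g x y ∂μ) ∂μ) := by
      have hF12 : Integrable (Function.uncurry fun x y =>
          dqfun f x y * g.eval x + f.eval y * dqfun g x y) (μ.prod μ) := hF1.add hF2
      rw [integral_integral hF12, integral_integral hF1, integral_integral hF2]
      exact integral_add hF1 hF2
    rw [hsplit] at h1
    have e1 : ∫ x, (∫ y, dqfun f x y * g.eval x ∂μ) ∂μ
        = ∫ x, (Lop (mom μ) f).eval x * g.eval x ∂μ := by
      refine integral_congr_ae (Filter.Eventually.of_forall fun x => ?_)
      dsimp only
      rw [integral_mul_const, hLeval]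
    have e2 : ∫ x, (∫ y, f.eval y * dqfun g x y ∂μ) ∂μ
        = ∫ x, f.eval x * (Lop (mom μ) g).eval x ∂μ := by
      rw [integral_integral_swap hF2]
      refine integral_congr_ae (Filter.Eventually.of_forall fun y => ?_)
      dsimp only
      rw [integral_const_mul _ _]
      congr 1
      rw [← hLeval g y]
      refine integral_congr_ae (Filter.Eventually.of_forall fun x => ?_)
      exact dqfun_symm g x y
    rw [e1, e2] at h1
    exact h1
  have intLg : Integrable (fun x => (Lop (mom μ) f).eval x * g.eval x) μ :=
    intc _ ((Lop (mom μ) f).continuous.mul g.continuous)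
  have intfLg : Integrable (fun x => f.eval x * (Lop (mom μ) g).eval x) μ :=
    intc _ (f.continuous.mul (Lop (mom μ) g).continuous)
  have lhs_eq : ∫ x, ((Lop (mom μ) f).eval x - (1 / 2) * H x * f.eval x) * g.eval x ∂μ
      = (∫ x, (Lop (mom μ) f).eval x * g.eval x ∂μ)
        - (1 / 2) * ∫ x, H x * (f * g).eval x ∂μ := by
    have hfe : (fun x => ((Lop (mom μ) f).eval x - (1 / 2) * H x * f.eval x) * g.eval x)
        = fun x => (Lop (mom μ) f).eval x * g.eval x - (1 / 2) * (H x * (f * g).eval x) := by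
      funext x; simp only [eval_mul]; ring
    rw [hfe, integral_sub intLg ((intHp (f * g)).const_mul (1 / 2)), integral_const_mul _ _]
  have rhs_eq : ∫ x, f.eval x * ((Lop (mom μ) g).eval x - (1 / 2) * H x * g.eval x) ∂μ
      = (∫ x, f.eval x * (Lop (mom μ) g).eval x ∂μ)
        - (1 / 2) * ∫ x, H x * (f * g).eval x ∂μ := by
    have hfe : (fun x => f.eval x * ((Lop (mom μ) g).eval x - (1 / 2) * H x * g.eval x))
        = fun x => f.eval x * (Lop (mom μ) g).eval x - (1 / 2) * (H x * (f * g).eval x) := by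
      funext x; simp only [eval_mul]; ring
    rw [hfe, integral_sub intfLg ((intHp (f * g)).const_mul (1 / 2)), integral_const_mul _ _]
  rw [lhs_eq, rhs_eq]
  linarith [key]
end

section
/- Let μ and ν be compactly supported probability measures on ℝ, with the support of μ infinite. Then there exists a sequence of monic polynomials (A_n)_{n≥0} with deg A_n = n, L_ν[A_n] = A_{n−1} for all n ≥ 1, and ∫ A_n A_m dμ = 0 for all n ≠ m, if and only if there exist β′, β ∈ ℝ and γ′, γ > 0 such that ν is semicircular with mean β′ and variance γ′ (at the level of moments) and μ = Φ_{β,γ}[ν]. -/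
open MeasureTheory Polynomial

/-- The (topological) support of a measure on ℝ. -/
def msupport (μ : Measure ℝ) : Set ℝ := {x | ∀ U ∈ nhds x, μ U ≠ 0}

/-- `JacobiShift β γ mν mμ` says (at the level of moment sequences) that `μ = Φ_{β,γ}[ν]`,
the Jacobi-parameter left shift of `ν`:
`m^μ_n = β m^μ_{n-1} + γ Σ_{i+j=n-2} m^ν_i m^μ_j` for every `n ≥ 1`. -/
def JacobiShift (β γ : ℝ) (mν mμ : ℕ → ℝ) : Prop :=
  ∀ n : ℕ, 1 ≤ n →
    mμ n = β * mμ (n - 1) + γ * ∑ i ∈ Finset.range (n - 1), mν i * mμ (n - 2 - i)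

namespace OPX

/-- the building block polynomial -/
noncomputable def B (m : ℕ → ℝ) (n : ℕ) : Polynomial ℝ :=
  ∑ k ∈ Finset.range n, C (m (n - 1 - k)) * X ^ k

lemma Lop_def (m : ℕ → ℝ) (f : Polynomial ℝ) : Lop m f = f.sum fun n a => C a * B m n := rfl

lemma Lop_add (m : ℕ → ℝ) (p q : Polynomial ℝ) : Lop m (p + q) = Lop m p + Lop m q := by
  simp only [Lop_def]
  exact Polynomial.sum_add_index p q _ (by simp) (by intros; rw [map_add, add_mul])

lemma Lop_monomial (m : ℕ → ℝ) (n : ℕ) (a : ℝ) :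
    Lop m (monomial n a) = C a * B m n := by
  simp only [Lop_def]
  exact Polynomial.sum_monomial_index a _ (by simp)

lemma Lop_smul (m : ℕ → ℝ) (c : ℝ) (p : Polynomial ℝ) :
    Lop m (C c * p) = C c * Lop m p := by
  induction p using Polynomial.induction_on' with
  | add p q hp hq => rw [mul_add, Lop_add, Lop_add, hp, hq, mul_add]
  | monomial n a =>
      rw [Lop_monomial, show (C c * monomial n a : Polynomial ℝ) = monomial n (c * a) from by
        rw [Polynomial.C_mul_monomial], Lop_monomial, map_mul, mul_assoc]

lemma Lop_C (m : ℕ → ℝ) (a : ℝ) : Lop m (C a) = 0 := by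
  rw [← Polynomial.monomial_zero_left, Lop_monomial]
  simp [B]

lemma Lop_one (m : ℕ → ℝ) : Lop m 1 = 0 := by
  simpa using Lop_C m 1

lemma Lop_X_pow (m : ℕ → ℝ) (n : ℕ) : Lop m (X ^ n) = B m n := by
  rw [← Polynomial.monomial_one_right_eq_X_pow, Lop_monomial]; simp

/-- moment functional as a linear map -/
noncomputable def lam (m : ℕ → ℝ) : Polynomial ℝ →ₗ[ℝ] ℝ where
  toFun p := p.sum fun n a => a * m n
  map_add' p q := Polynomial.sum_add_index p q _ (by simp) (by intros; rw [add_mul])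
  map_smul' c p := by
    simp only [RingHom.id_apply, smul_eq_mul]
    rw [Polynomial.sum_smul_index p c _ (by simp), Polynomial.sum_def, Polynomial.sum_def,
      Finset.mul_sum]
    simp [mul_assoc]

lemma lam_monomial (m : ℕ → ℝ) (n : ℕ) (a : ℝ) : lam m (monomial n a) = a * m n := by
  have : lam m (monomial n a) = (monomial n a).sum fun k b => b * m k := rfl
  rw [this, Polynomial.sum_monomial_index a _ (by simp)]

lemma lam_X_pow (m : ℕ → ℝ) (n : ℕ) : lam m (X ^ n) = m n := by
  rw [← Polynomial.monomial_one_right_eq_X_pow, lam_monomial, one_mul]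

lemma lam_C (m : ℕ → ℝ) (a : ℝ) : lam m (C a) = a * m 0 := by
  rw [← Polynomial.monomial_zero_left, lam_monomial]

lemma lam_C_mul (m : ℕ → ℝ) (c : ℝ) (p : Polynomial ℝ) : lam m (C c * p) = c * lam m p := by
  rw [← Polynomial.smul_eq_C_mul, LinearMap.map_smul, smul_eq_mul]

lemma B_succ (m : ℕ → ℝ) (n : ℕ) : B m (n + 1) = X * B m n + C (m n) := by
  rw [B, Finset.sum_range_succ']
  simp only [Nat.add_sub_cancel, Nat.sub_zero, pow_zero, mul_one, B, Finset.mul_sum]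
  congr 1
  · apply Finset.sum_congr rfl
    intro k hk
    have h : n - (k + 1) = n - 1 - k := by omega
    rw [h, pow_succ]
    ring

/-- the master identity -/
lemma Lop_X_mul (m : ℕ → ℝ) (p : Polynomial ℝ) :
    Lop m (X * p) = X * Lop m p + C (lam m p) := by
  induction p using Polynomial.induction_on' with
  | add p q hp hq =>
      rw [mul_add, Lop_add, hp, hq, Lop_add, map_add, map_add]; ring
  | monomial n a =>
      rw [Lop_monomial, lam_monomial]
      have : X * monomial n a = monomial (n+1) a := by
        rw [Polynomial.X_mul_monomial]
      rw [this, Lop_monomial, B_succ, map_mul]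
      ring

lemma lam_B (mρ mν : ℕ → ℝ) (k : ℕ) :
    lam mρ (B mν k) = ∑ i ∈ Finset.range k, mν i * mρ (k - 1 - i) := by
  rw [B, map_sum, ← Finset.sum_range_reflect (fun i => mν i * mρ (k - 1 - i)) k]
  apply Finset.sum_congr rfl
  intro j hj
  rw [Finset.mem_range] at hj
  rw [lam_C_mul, lam_X_pow]
  have : k - 1 - (k - 1 - j) = j := by omega
  rw [this]

lemma JS_iff (mν mρ : ℕ → ℝ) (a c : ℝ) :
    (∀ n : ℕ, 1 ≤ n →
      mρ n = a * mρ (n - 1) + c * ∑ i ∈ Finset.range (n - 1), mν i * mρ (n - 2 - i))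
    ↔ ∀ p : Polynomial ℝ,
        lam mρ (X * p) = a * lam mρ p + c * lam mρ (Lop mν p) := by
  constructor
  · intro h p
    induction p using Polynomial.induction_on' with
    | add p q hp hq =>
        simp only [mul_add, map_add, Lop_add]
        rw [hp, hq]; ring
    | monomial k b =>
        rw [Polynomial.X_mul_monomial, lam_monomial, lam_monomial, Lop_monomial, lam_C_mul,
          lam_B, h (k + 1) (by omega)]
        have h1 : k + 1 - 1 = k := by omega
        have h2 : ∀ i : ℕ, k + 1 - 2 - i = k - 1 - i := by omega
        simp only [h1, h2]
        ring
  · intro h n hn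
    have hx : (X : Polynomial ℝ) * X ^ (n - 1) = X ^ n := by
      rw [← pow_succ']
      congr 1
      omega
    have := h (X ^ (n - 1))
    rw [hx, lam_X_pow, lam_X_pow, Lop_X_pow, lam_B] at this
    rw [this]
    have h2 : ∀ i : ℕ, n - 1 - 1 - i = n - 2 - i := by omega
    simp only [h2]

section Measure

variable (ρ : Measure ℝ) [IsProbabilityMeasure ρ]

lemma integrable_of_continuous (hcs : CompactSupp ρ) (f : ℝ → ℝ) (hf : Continuous f) :
    Integrable f ρ := by
  obtain ⟨K, hK, hKc⟩ := hcs
  obtain ⟨C, hC⟩ := hK.exists_bound_of_continuousOn hf.continuousOn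
  apply Integrable.mono' (integrable_const C) hf.aestronglyMeasurable
  have hae : ∀ᵐ x ∂ρ, x ∈ K := by
    rw [MeasureTheory.ae_iff]
    simpa [Set.compl_def] using hKc
  filter_upwards [hae] with x hx using hC x hx

lemma mom_zero : mom ρ 0 = 1 := by
  simp [mom]

lemma lam_eq_range (m : ℕ → ℝ) (p : Polynomial ℝ) (n : ℕ) (h : p.natDegree < n) :
    lam m p = ∑ k ∈ Finset.range n, p.coeff k * m k := by
  conv_lhs => rw [p.as_sum_range' n h]
  rw [map_sum]
  simp [lam_monomial]

lemma integral_poly (hcs : CompactSupp ρ) (p : Polynomial ℝ) :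
    ∫ x, p.eval x ∂ρ = lam (mom ρ) p := by
  have hev : ∀ x : ℝ, p.eval x = ∑ k ∈ Finset.range (p.natDegree + 1), p.coeff k * x ^ k := by
    intro x; exact p.eval_eq_sum_range x
  rw [lam_eq_range (mom ρ) p (p.natDegree + 1) (by omega)]
  have : (fun x : ℝ => p.eval x) = fun x => ∑ k ∈ Finset.range (p.natDegree + 1), p.coeff k * x ^ k := by
    funext x; exact hev x
  rw [this, MeasureTheory.integral_finset_sum]
  · apply Finset.sum_congr rfl
    intro k _
    rw [MeasureTheory.integral_const_mul]
    rfl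
  · intro k _
    exact (integrable_of_continuous ρ hcs _ (continuous_pow k)).const_mul _

lemma lam_sq_pos (hcs : CompactSupp ρ) (hinf : (msupport ρ).Infinite)
    (p : Polynomial ℝ) (hp : p ≠ 0) : 0 < lam (mom ρ) (p * p) := by
  obtain ⟨x0, hx0⟩ := (hinf.diff (Polynomial.finite_setOf_isRoot hp)).nonempty
  obtain ⟨hx0s, hx0r⟩ := hx0
  have hne : p.eval x0 ≠ 0 := hx0r
  set ε : ℝ := (p.eval x0) ^ 2 / 2 with hεdef
  have hε : 0 < ε := by positivity
  set U : Set ℝ := (fun x => (p.eval x) ^ 2) ⁻¹' Set.Ioi ε with hUdef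
  have hUopen : IsOpen U := (((Polynomial.continuous p).pow 2).isOpen_preimage _ isOpen_Ioi)
  have hx0U : x0 ∈ U := by
    simp only [hUdef, Set.mem_preimage, Set.mem_Ioi, hεdef]
    have : (0:ℝ) < (p.eval x0) ^ 2 := by positivity
    linarith
  have hU : ρ U ≠ 0 := hx0s U (hUopen.mem_nhds hx0U)
  have hle : ∀ x, U.indicator (fun _ => ε) x ≤ (p.eval x) ^ 2 := by
    intro x
    by_cases hx : x ∈ U
    · rw [Set.indicator_of_mem hx]
      exact le_of_lt hx
    · rw [Set.indicator_of_notMem hx]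
      positivity
  have h1 : Integrable (U.indicator fun _ => ε) ρ := (integrable_const ε).indicator hUopen.measurableSet
  have h2 : Integrable (fun x => (p.eval x) ^ 2) ρ :=
    integrable_of_continuous ρ hcs _ ((Polynomial.continuous p).pow 2)
  have key : 0 < ∫ x, (p.eval x) ^ 2 ∂ρ := by
    calc (0:ℝ) < ε * (ρ U).toReal :=
          mul_pos hε (ENNReal.toReal_pos hU (measure_ne_top ρ U))
      _ = ∫ x, U.indicator (fun _ => ε) x ∂ρ := by
          rw [MeasureTheory.integral_indicator_const ε hUopen.measurableSet, smul_eq_mul, measureReal_def]; ring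
      _ ≤ ∫ x, (p.eval x) ^ 2 ∂ρ := integral_mono h1 h2 hle
  have : ∫ x, (p.eval x) ^ 2 ∂ρ = lam (mom ρ) (p * p) := by
    rw [← integral_poly ρ hcs]
    congr 1
    funext x
    rw [Polynomial.eval_mul]
    ring
  linarith [this ▸ key]

end Measure

section Construction

variable (β β' γ γ' : ℝ)

noncomputable def ASeq : ℕ → Polynomial ℝ
  | 0 => 1
  | 1 => X - C β
  | (n + 2) => (X - C β') * ASeq (n + 1) - C (if n = 0 then γ else γ') * ASeq n

lemma ASeq_zero : ASeq β β' γ γ' 0 = 1 := rfl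
lemma ASeq_one : ASeq β β' γ γ' 1 = X - C β := rfl
lemma ASeq_succ_succ (n : ℕ) :
    ASeq β β' γ γ' (n + 2) =
      (X - C β') * ASeq β β' γ γ' (n + 1) - C (if n = 0 then γ else γ') * ASeq β β' γ γ' n := rfl

lemma ASeq_spec : ∀ n, (ASeq β β' γ γ' n).Monic ∧ (ASeq β β' γ γ' n).natDegree = n := by
  intro n
  induction n using Nat.strong_induction_on with
  | _ n ih =>
    match n with
    | 0 => exact ⟨monic_one, natDegree_one⟩
    | 1 => exact ⟨monic_X_sub_C β, natDegree_X_sub_C β⟩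
    | (n + 2) =>
      obtain ⟨h1m, h1d⟩ := ih (n + 1) (by omega)
      obtain ⟨h0m, h0d⟩ := ih n (by omega)
      set c : ℝ := if n = 0 then γ else γ' with hc
      have hm : ((X - C β') * ASeq β β' γ γ' (n + 1)).Monic := (monic_X_sub_C β').mul h1m
      have hd : ((X - C β') * ASeq β β' γ γ' (n + 1)).natDegree = n + 2 := by
        rw [(monic_X_sub_C β').natDegree_mul h1m, natDegree_X_sub_C, h1d]; omega
      have hlt : (-(C c * ASeq β β' γ γ' n)).degree
          < ((X - C β') * ASeq β β' γ γ' (n + 1)).degree := by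
        rw [degree_neg]
        apply degree_lt_degree
        have := natDegree_C_mul_le c (ASeq β β' γ γ' n)
        omega
      have heq : ASeq β β' γ γ' (n + 2)
          = (X - C β') * ASeq β β' γ γ' (n + 1) + -(C c * ASeq β β' γ γ' n) := by
        rw [ASeq_succ_succ]; ring
      constructor
      · rw [heq]; exact hm.add_of_left hlt
      · rw [heq]
        have := degree_add_eq_left_of_degree_lt hlt
        rw [degree_eq_natDegree hm.ne_zero, hd] at this
        exact natDegree_eq_of_degree_eq_some this

end Construction

lemma Lop_zero (m : ℕ → ℝ) : Lop m 0 = 0 := by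
  have := Lop_C m 0
  simpa using this

lemma Lop_neg (m : ℕ → ℝ) (p : Polynomial ℝ) : Lop m (-p) = - Lop m p := by
  have h : (-p : Polynomial ℝ) = C (-1) * p := by
    rw [map_neg, Polynomial.C_1]; ring
  rw [h, Lop_smul, map_neg, Polynomial.C_1]; ring

lemma Lop_sub (m : ℕ → ℝ) (p q : Polynomial ℝ) : Lop m (p - q) = Lop m p - Lop m q := by
  rw [sub_eq_add_neg, Lop_add, Lop_neg, sub_eq_add_neg]

lemma Lop_X (m : ℕ → ℝ) : Lop m X = C (m 0) := by
  rw [← pow_one (X : Polynomial ℝ), Lop_X_pow]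
  simp [B]

lemma Lop_sum {ι : Type*} (m : ℕ → ℝ) (s : Finset ι) (f : ι → Polynomial ℝ) :
    Lop m (∑ i ∈ s, f i) = ∑ i ∈ s, Lop m (f i) := by
  classical
  induction s using Finset.induction_on with
  | empty => simp [Lop_zero]
  | insert _ _ h ih => rw [Finset.sum_insert h, Lop_add, ih, Finset.sum_insert h]

lemma lam_one (m : ℕ → ℝ) (h : m 0 = 1) : lam m 1 = 1 := by
  rw [← Polynomial.C_1, lam_C, h, one_mul]

lemma lam_X (m : ℕ → ℝ) : lam m X = m 1 := by
  rw [← pow_one (X : Polynomial ℝ), lam_X_pow]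

section Dir2

variable {β β' γ γ' : ℝ} {mν mμ : ℕ → ℝ}

lemma X_mul_ASeq (n : ℕ) :
    X * ASeq β β' γ γ' (n + 1) = ASeq β β' γ γ' (n + 2) + C β' * ASeq β β' γ γ' (n + 1)
      + C (if n = 0 then γ else γ') * ASeq β β' γ γ' n := by
  rw [ASeq_succ_succ]; ring

lemma ASeq_two : ASeq β β' γ γ' 2 = X * ASeq β β' γ γ' 1 - C β' * ASeq β β' γ γ' 1 - C γ := by
  rw [ASeq_succ_succ, if_pos rfl, ASeq_zero]; ring

variable (hν0 : mν 0 = 1)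
  (hSν : ∀ p : Polynomial ℝ, lam mν (X * p) = β' * lam mν p + γ' * lam mν (Lop mν p))

include hν0 hSν in
lemma LopASeq : ∀ n : ℕ, Lop mν (ASeq β β' γ γ' (n + 1)) = ASeq β β' γ γ' n := by
  have hL1 : Lop mν (ASeq β β' γ γ' 1) = 1 := by
    rw [ASeq_one, Lop_sub, Lop_X, Lop_C, hν0]; simp
  have hm1 : mν 1 = β' := by
    have h := hSν 1
    rw [mul_one, Lop_one, map_zero, mul_zero, add_zero, lam_one mν hν0, mul_one, lam_X] at h
    exact h
  have hlA1 : lam mν (ASeq β β' γ γ' 1) = β' - β := by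
    rw [ASeq_one, map_sub, lam_X, lam_C, hν0, hm1]; ring
  have hL2 : Lop mν (ASeq β β' γ γ' 2) = ASeq β β' γ γ' 1 := by
    rw [ASeq_two, Lop_sub, Lop_sub, Lop_X_mul, Lop_smul, hL1, hlA1, Lop_C, ASeq_one, map_sub]
    ring
  have hlA2 : lam mν (ASeq β β' γ γ' 2) = γ' - γ := by
    rw [ASeq_two, map_sub, map_sub, hSν (ASeq β β' γ γ' 1), hL1, lam_C_mul,
      lam_one mν hν0, lam_C, hν0]
    ring
  intro n
  induction n using Nat.strong_induction_on with
  | _ n ih =>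
    match n with
    | 0 => exact hL1
    | 1 => exact hL2
    | (m + 2) =>
      have ih1 := ih (m + 1) (by omega)
      have ih0 := ih m (by omega)
      have hlA : lam mν (ASeq β β' γ γ' (m + 2)) = if m = 0 then γ' - γ else 0 := by
        by_cases hm : m = 0
        · rw [if_pos hm, hm]; exact hlA2
        · rw [if_neg hm]
          have hexp : ASeq β β' γ γ' (m + 2) = X * ASeq β β' γ γ' (m + 1)
              - C β' * ASeq β β' γ γ' (m + 1) - C γ' * ASeq β β' γ γ' m := by
            rw [ASeq_succ_succ, if_neg hm]; ring
          rw [hexp, map_sub, map_sub, hSν (ASeq β β' γ γ' (m + 1)), ih0, lam_C_mul, lam_C_mul]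
          ring
      have hexp3 : ASeq β β' γ γ' (m + 3) = X * ASeq β β' γ γ' (m + 2)
          - C β' * ASeq β β' γ γ' (m + 2) - C γ' * ASeq β β' γ γ' (m + 1) := by
        rw [show m + 3 = (m + 1) + 2 from rfl, ASeq_succ_succ, if_neg (by omega)]; ring
      rw [hexp3, Lop_sub, Lop_sub, Lop_X_mul, Lop_smul, Lop_smul, ih1, ih0, hlA]
      by_cases hm : m = 0
      · rw [if_pos hm, hm, ASeq_succ_succ, if_pos rfl, ASeq_zero, map_sub]
        ring
      · rw [if_neg hm, ASeq_succ_succ, if_neg hm, map_zero]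
        ring

variable (hμ0 : mμ 0 = 1)
  (hSμ : ∀ p : Polynomial ℝ, lam mμ (X * p) = β * lam mμ p + γ * lam mμ (Lop mν p))

include hν0 hSν hμ0 hSμ in
lemma lamASeq_zero : ∀ n : ℕ, lam mμ (ASeq β β' γ γ' (n + 1)) = 0 := by
  have hm1 : mμ 1 = β := by
    have h := hSμ 1
    rw [mul_one, Lop_one, map_zero, mul_zero, add_zero, lam_one mμ hμ0, mul_one, lam_X] at h
    exact h
  have h0 : lam mμ (ASeq β β' γ γ' 1) = 0 := by
    rw [ASeq_one, map_sub, lam_X, lam_C, hμ0, hm1]; ring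
  have hLA := LopASeq hν0 hSν (β := β) (γ := γ)
  intro n
  induction n using Nat.strong_induction_on with
  | _ n ih =>
    match n with
    | 0 => exact h0
    | 1 =>
      rw [ASeq_two, map_sub, map_sub, hSμ (ASeq β β' γ γ' 1), hLA 0, ASeq_zero,
        lam_one mμ hμ0, lam_C_mul, h0, lam_C, hμ0]
      ring
    | (m + 2) =>
      have ih1 := ih (m + 1) (by omega)
      have ih0 := ih m (by omega)
      have hexp3 : ASeq β β' γ γ' (m + 3) = X * ASeq β β' γ γ' (m + 2)
          - C β' * ASeq β β' γ γ' (m + 2) - C (if m + 1 = 0 then γ else γ') * ASeq β β' γ γ' (m + 1) := by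
        rw [show m + 3 = (m + 1) + 2 from rfl, ASeq_succ_succ]; ring
      rw [hexp3, map_sub, map_sub, hSμ (ASeq β β' γ γ' (m + 2)), hLA (m + 1), lam_C_mul,
        lam_C_mul, ih1, ih0]
      ring

include hν0 hSν hμ0 hSμ in
lemma lam_Xpow_ASeq : ∀ k n : ℕ, k < n → lam mμ (X ^ k * ASeq β β' γ γ' n) = 0 := by
  intro k
  induction k using Nat.strong_induction_on with
  | _ k ih =>
    match k with
    | 0 =>
      intro n hn
      match n, hn with
      | (n' + 1), _ =>
        rw [pow_zero, one_mul]
        exact lamASeq_zero hν0 hSν hμ0 hSμ n'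
    | (k + 1) =>
      intro n hn
      match n, hn with
      | (j + 1), hn =>
        have hj : k < j := by omega
        have hexp : X ^ (k + 1) * ASeq β β' γ γ' (j + 1)
            = X ^ k * ASeq β β' γ γ' (j + 2) + C β' * (X ^ k * ASeq β β' γ γ' (j + 1))
              + C (if j = 0 then γ else γ') * (X ^ k * ASeq β β' γ γ' j) := by
          rw [pow_succ, mul_assoc, X_mul_ASeq]; ring
        rw [hexp, map_add, map_add, lam_C_mul, lam_C_mul,
          ih k (by omega) (j + 2) (by omega), ih k (by omega) (j + 1) (by omega),
          ih k (by omega) j hj]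
        ring

include hν0 hSν hμ0 hSμ in
lemma lam_ASeq_mul_ASeq : ∀ n m' : ℕ, n ≠ m' →
    lam mμ (ASeq β β' γ γ' n * ASeq β β' γ γ' m') = 0 := by
  have key : ∀ m' n : ℕ, m' < n → lam mμ (ASeq β β' γ γ' m' * ASeq β β' γ γ' n) = 0 := by
    intro m' n h
    have hdeg : (ASeq β β' γ γ' m').natDegree < m' + 1 := by
      rw [(ASeq_spec β β' γ γ' m').2]; omega
    conv_lhs => rw [(ASeq β β' γ γ' m').as_sum_range' (m' + 1) hdeg]
    rw [Finset.sum_mul, map_sum]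
    apply Finset.sum_eq_zero
    intro i hi
    rw [Finset.mem_range] at hi
    rw [← Polynomial.C_mul_X_pow_eq_monomial, mul_assoc, lam_C_mul,
      lam_Xpow_ASeq hν0 hSν hμ0 hSμ i n (by omega)]
    ring
  intro n m' hne
  rcases lt_or_gt_of_ne hne with h | h
  · exact key n m' h
  · rw [mul_comm]; exact key m' n h

end Dir2

section Dir1

variable {mν mμ : ℕ → ℝ} {A : ℕ → Polynomial ℝ}

lemma exists_expansion (hmon : ∀ n, (A n).Monic) (hdeg : ∀ n, (A n).natDegree = n) :
    ∀ N (p : Polynomial ℝ), p.natDegree ≤ N →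
      ∃ c : ℕ → ℝ, p = ∑ j ∈ Finset.range (N + 1), C (c j) * A j := by
  intro N
  induction N with
  | zero =>
    intro p hp
    have hA0 : A 0 = 1 := (hmon 0).natDegree_eq_zero.mp (hdeg 0)
    refine ⟨fun _ => p.coeff 0, ?_⟩
    rw [Finset.sum_range_one, hA0, mul_one, ← Polynomial.eq_C_of_natDegree_le_zero hp]
  | succ N ihN =>
    intro p hp
    set q := p - C (p.coeff (N + 1)) * A (N + 1) with hq
    have hqdeg : q.natDegree ≤ N := by
      rw [natDegree_le_iff_coeff_eq_zero]
      intro M hM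
      rw [hq, Polynomial.coeff_sub, Polynomial.coeff_C_mul]
      by_cases hM1 : M = N + 1
      · subst hM1
        have h1 : (A (N + 1)).coeff (N + 1) = 1 := by
          have := (hmon (N + 1)).coeff_natDegree
          rwa [hdeg (N + 1)] at this
        rw [h1]; ring
      · have h1 : p.coeff M = 0 := coeff_eq_zero_of_natDegree_lt (by omega)
        have h2 : (A (N + 1)).coeff M = 0 := coeff_eq_zero_of_natDegree_lt (by rw [hdeg]; omega)
        rw [h1, h2]; ring
    obtain ⟨c, hc⟩ := ihN q hqdeg
    refine ⟨fun j => if j = N + 1 then p.coeff (N + 1) else c j, ?_⟩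
    rw [Finset.sum_range_succ]
    beta_reduce
    rw [if_pos rfl]
    have hsum : ∑ j ∈ Finset.range (N + 1),
        C (if j = N + 1 then p.coeff (N + 1) else c j) * A j
        = ∑ j ∈ Finset.range (N + 1), C (c j) * A j := by
      apply Finset.sum_congr rfl
      intro j hj
      rw [Finset.mem_range] at hj
      rw [if_neg (by omega)]
    rw [hsum, ← hc, hq]
    ring

lemma ortho_lower (hmon : ∀ n, (A n).Monic) (hdeg : ∀ n, (A n).natDegree = n)
    (horth : ∀ n m : ℕ, n ≠ m → lam mμ (A n * A m) = 0) :
    ∀ n (p : Polynomial ℝ), p.natDegree < n → lam mμ (A n * p) = 0 := by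
  intro n p hp
  obtain ⟨c, hc⟩ := exists_expansion hmon hdeg (n - 1) p (by omega)
  rw [hc, Finset.mul_sum, map_sum]
  apply Finset.sum_eq_zero
  intro j hj
  rw [Finset.mem_range] at hj
  rw [show A n * (C (c j) * A j) = C (c j) * (A n * A j) by ring, lam_C_mul,
    horth n j (by omega)]
  ring

lemma X_mul_sub_natDegree (hmon : ∀ n, (A n).Monic) (hdeg : ∀ n, (A n).natDegree = n)
    (n : ℕ) : (X * A n - A (n + 1)).natDegree ≤ n := by
  rw [natDegree_le_iff_coeff_eq_zero]
  intro M hM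
  match M, hM with
  | (K + 1), hM =>
    rw [Polynomial.coeff_sub, coeff_X_mul]
    by_cases hK : K = n
    · subst hK
      have h1 : (A K).coeff K = 1 := by
        have := (hmon K).coeff_natDegree; rwa [hdeg K] at this
      have h2 : (A (K + 1)).coeff (K + 1) = 1 := by
        have := (hmon (K + 1)).coeff_natDegree; rwa [hdeg (K + 1)] at this
      rw [h1, h2]; ring
    · have h1 : (A n).coeff K = 0 := coeff_eq_zero_of_natDegree_lt (by rw [hdeg]; omega)
      have h2 : (A (n + 1)).coeff (K + 1) = 0 := coeff_eq_zero_of_natDegree_lt (by rw [hdeg]; omega)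
      rw [h1, h2]; ring

lemma rec_exists (hmon : ∀ n, (A n).Monic) (hdeg : ∀ n, (A n).natDegree = n)
    (horth : ∀ n m : ℕ, n ≠ m → lam mμ (A n * A m) = 0)
    (hd : ∀ n, 0 < lam mμ (A n * A n)) (n : ℕ) (hn : 1 ≤ n) :
    ∃ b : ℝ, X * A n = A (n + 1) + C b * A n
      + C (lam mμ (A n * A n) / lam mμ (A (n - 1) * A (n - 1))) * A (n - 1) := by
  set q := X * A n - A (n + 1) with hqdef
  obtain ⟨c, hc⟩ := exists_expansion hmon hdeg n q (X_mul_sub_natDegree hmon hdeg n)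
  have hcj : ∀ j, j ≤ n → lam mμ (q * A j) = c j * lam mμ (A j * A j) := by
    intro j hj
    rw [hc, Finset.sum_mul, map_sum]
    rw [Finset.sum_eq_single j]
    · rw [show C (c j) * A j * A j = C (c j) * (A j * A j) by ring, lam_C_mul]
    · intro i _ hij
      rw [show C (c i) * A i * A j = C (c i) * (A i * A j) by ring, lam_C_mul, horth i j hij]
      ring
    · intro hj'
      exact absurd (Finset.mem_range.mpr (by omega)) hj'
  have hlow : ∀ j, j + 2 ≤ n → c j = 0 := by
    intro j hj
    have h1 : lam mμ (q * A j) = 0 := by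
      rw [show q * A j = A n * (X * A j) - A (n + 1) * A j by rw [hqdef]; ring, map_sub,
        ortho_lower hmon hdeg horth n (X * A j)
          (by rw [Polynomial.monic_X.natDegree_mul (hmon j), natDegree_X, hdeg]; omega),
        horth (n + 1) j (by omega)]
      ring
    have h2 := hcj j (by omega)
    rw [h1] at h2
    have := (hd j).ne'
    rcases mul_eq_zero.mp h2.symm with h | h
    · exact h
    · exact absurd h this
  have hcn1 : c (n - 1) = lam mμ (A n * A n) / lam mμ (A (n - 1) * A (n - 1)) := by
    have hr : (X * A (n - 1) - A n).natDegree ≤ n - 1 := by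
      have := X_mul_sub_natDegree hmon hdeg (n - 1)
      rwa [show n - 1 + 1 = n by omega] at this
    have h1 : lam mμ (q * A (n - 1)) = lam mμ (A n * A n) := by
      rw [show q * A (n - 1) = A n * (X * A (n - 1)) - A (n + 1) * A (n - 1) by
        rw [hqdef]; ring, map_sub, horth (n + 1) (n - 1) (by omega),
        show A n * (X * A (n - 1)) = A n * A n + A n * (X * A (n - 1) - A n) by ring,
        map_add, ortho_lower hmon hdeg horth n (X * A (n - 1) - A n)
          (lt_of_le_of_lt hr (by omega))]
      ring
    have h2 := hcj (n - 1) (by omega)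
    rw [h1] at h2
    rw [eq_div_iff (hd (n - 1)).ne']
    linarith [h2]
  have hcollapse : q = C (c n) * A n + C (c (n - 1)) * A (n - 1) := by
    rw [hc, show n + 1 = (n - 1) + 1 + 1 by omega, Finset.sum_range_succ, Finset.sum_range_succ,
      Finset.sum_eq_zero (fun j hj => by
        rw [Finset.mem_range] at hj
        rw [hlow j (by omega)]
        simp), show n - 1 + 1 = n by omega]
    ring
  refine ⟨c n, ?_⟩
  rw [← hcn1]
  have hq2 : X * A n - A (n + 1) = C (c n) * A n + C (c (n - 1)) * A (n - 1) := hcollapse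
  linear_combination hq2

end Dir1

section Dir1b

variable {mν mμ : ℕ → ℝ} {A : ℕ → Polynomial ℝ}

lemma forward_main (hmon : ∀ n, (A n).Monic) (hdeg : ∀ n, (A n).natDegree = n)
    (hLop : ∀ n : ℕ, 1 ≤ n → Lop mν (A n) = A (n - 1))
    (horth : ∀ n m : ℕ, n ≠ m → lam mμ (A n * A m) = 0)
    (hd : ∀ n, 0 < lam mμ (A n * A n))
    (hν0 : mν 0 = 1) (hμ0 : mμ 0 = 1) :
    ∃ β' β γ' γ : ℝ, 0 < γ' ∧ 0 < γ ∧
      (∀ p, lam mν (X * p) = β' * lam mν p + γ' * lam mν (Lop mν p)) ∧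
      (∀ p, lam mμ (X * p) = β * lam mμ p + γ * lam mμ (Lop mν p)) := by
  classical
  have hA0 : A 0 = 1 := (hmon 0).natDegree_eq_zero.mp (hdeg 0)
  -- the three-term recurrence
  have hex : ∀ n : ℕ, ∃ bb : ℝ, 1 ≤ n → X * A n = A (n + 1) + C bb * A n
      + C (lam mμ (A n * A n) / lam mμ (A (n - 1) * A (n - 1))) * A (n - 1) := by
    intro n
    by_cases hn : 1 ≤ n
    · obtain ⟨bb, hbb⟩ := rec_exists hmon hdeg horth hd n hn
      exact ⟨bb, fun _ => hbb⟩
    · exact ⟨0, fun h => absurd h hn⟩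
  choose b hrec using hex
  set g : ℕ → ℝ := fun n => lam mμ (A n * A n) / lam mμ (A (n - 1) * A (n - 1)) with hgdef
  have hgpos : ∀ n, 0 < g n := by
    intro n
    simp only [hgdef]
    exact div_pos (hd n) (hd (n - 1))
  have hEs : ∀ k : ℕ, X * A (k + 1) = A (k + 2) + C (b (k + 1)) * A (k + 1)
      + C (g (k + 1)) * A k := by
    intro k
    have h := hrec (k + 1) (by omega)
    rw [Nat.add_sub_cancel] at h
    simp only [hgdef]
    rw [Nat.add_sub_cancel]
    exact h
  have hb0ex : ∃ b0 : ℝ, X * A 0 = A 1 + C b0 := by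
    have hdeg0 : (X * A 0 - A 1).natDegree ≤ 0 := X_mul_sub_natDegree hmon hdeg 0
    have h1 : X * A 0 - A 1 = C ((X * A 0 - A 1).coeff 0) :=
      Polynomial.eq_C_of_natDegree_le_zero hdeg0
    exact ⟨(X * A 0 - A 1).coeff 0, by linear_combination h1⟩
  obtain ⟨b0, hb0⟩ := hb0ex
  have hLopA0 : Lop mν (A 0) = 0 := by rw [hA0]; exact Lop_one mν
  have hLs : ∀ k, Lop mν (A (k + 1)) = A k := by
    intro k
    have h := hLop (k + 1) (by omega)
    rwa [Nat.add_sub_cancel] at h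
  have hL1 : Lop mν (A 1) = A 0 := hLs 0
  have hL2 : Lop mν (A 2) = A 1 := hLs 1
  -- coefficient facts
  have hcoeff1 : ∀ j, (A j).coeff j = 1 := fun j => by
    have := (hmon j).coeff_natDegree; rwa [hdeg j] at this
  have hcoeff0 : ∀ j k : ℕ, j < k → (A j).coeff k = 0 := fun j k h =>
    coeff_eq_zero_of_natDegree_lt (by rw [hdeg]; omega)
  -- the comparison equations
  have hcmp : ∀ m : ℕ,
      C (b (m + 1)) * A (m + 1) + C (g (m + 1)) * A m + C (lam mν (A (m + 2)))
        = C (b (m + 2)) * A (m + 1) + C (g (m + 2)) * A m := by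
    intro m
    have h1 : Lop mν (X * A (m + 2)) = X * A (m + 1) + C (lam mν (A (m + 2))) := by
      rw [Lop_X_mul, hLs (m + 1)]
    have h2 : Lop mν (X * A (m + 2)) = A (m + 2) + C (b (m + 2)) * A (m + 1)
        + C (g (m + 2)) * A m := by
      have hE2 : X * A (m + 2) = A (m + 3) + C (b (m + 2)) * A (m + 2)
          + C (g (m + 2)) * A (m + 1) := hEs (m + 1)
      rw [hE2, Lop_add, Lop_add, Lop_smul, Lop_smul, hLs (m + 2), hLs (m + 1), hLs m]
    have h3 := hEs m
    linear_combination h2 - h1 - h3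
  have hbconst : ∀ m : ℕ, b (m + 2) = b (m + 1) := by
    intro m
    have h := congrArg (fun p : Polynomial ℝ => p.coeff (m + 1)) (hcmp m)
    simp only [Polynomial.coeff_add, Polynomial.coeff_C_mul] at h
    rw [hcoeff1 (m + 1), hcoeff0 m (m + 1) (by omega), Polynomial.coeff_C,
      if_neg (by omega)] at h
    linarith [h]
  have hgconst : ∀ m : ℕ, 1 ≤ m → g (m + 2) = g (m + 1) := by
    intro m hm
    have h := congrArg (fun p : Polynomial ℝ => p.coeff m) (hcmp m)
    simp only [Polynomial.coeff_add, Polynomial.coeff_C_mul] at h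
    rw [hcoeff1 m, Polynomial.coeff_C, if_neg (by omega), hbconst m] at h
    linarith [h]
  have hlam3 : ∀ m : ℕ, 1 ≤ m → lam mν (A (m + 2)) = 0 := by
    intro m hm
    have h := hcmp m
    rw [hbconst m, hgconst m hm] at h
    have hC : C (lam mν (A (m + 2))) = 0 := by linear_combination h
    have h0 := congrArg (fun p : Polynomial ℝ => p.coeff 0) hC
    simpa using h0
  have hlam2 : lam mν (A 2) = g 2 - g 1 := by
    have h := hcmp 0
    norm_num at h
    rw [hA0, mul_one, mul_one, hbconst 0] at h
    have h0 := congrArg (fun p : Polynomial ℝ => p.coeff 0) h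
    simp only [Polynomial.coeff_add, Polynomial.coeff_C_mul, Polynomial.coeff_C_zero] at h0
    linarith [h0]
  have hlam1 : lam mν (A 1) = b 1 - b0 := by
    have hE1 : X * A 1 = A 2 + C (b 1) * A 1 + C (g 1) * A 0 := hEs 0
    have h1 : Lop mν (X * A 1) = X * A 0 + C (lam mν (A 1)) := by
      rw [Lop_X_mul, hL1]
    have h2 : Lop mν (X * A 1) = A 1 + C (b 1) * A 0 := by
      rw [hE1, Lop_add, Lop_add, Lop_smul, Lop_smul, hL2, hL1, hLopA0]
      ring
    have h3 := h1.symm.trans h2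
    rw [hb0, hA0, mul_one] at h3
    have hC : C (lam mν (A 1)) = C (b 1) - C b0 := by linear_combination h3
    have h0 := congrArg (fun p : Polynomial ℝ => p.coeff 0) hC
    simpa using h0
  -- constancy
  have hbc : ∀ n : ℕ, b (n + 1) = b 1 := by
    intro n
    induction n with
    | zero => rfl
    | succ k ih => exact (hbconst k).trans ih
  have hgc : ∀ n : ℕ, g (n + 2) = g 2 := by
    intro n
    induction n with
    | zero => rfl
    | succ k ih => exact (hgconst (k + 1) (by omega)).trans ih
  -- lamμ values
  have hμA0 : lam mμ (A 0) = 1 := by rw [hA0]; exact lam_one mμ hμ0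
  have hμA : ∀ n : ℕ, lam mμ (A (n + 1)) = 0 := by
    intro n
    have h := horth (n + 1) 0 (by omega)
    rwa [hA0, mul_one] at h
  have hνA0 : lam mν (A 0) = 1 := by rw [hA0]; exact lam_one mν hν0
  -- basis identities
  have Bμ : ∀ n, lam mμ (X * A n) = b0 * lam mμ (A n) + g 1 * lam mμ (Lop mν (A n)) := by
    intro n
    match n with
    | 0 =>
      rw [hb0, map_add, lam_C, hμ0, hLopA0, map_zero, hμA0]
      have : lam mμ (A 1) = 0 := hμA 0
      rw [this]; ring
    | 1 =>
      have hE1 : X * A 1 = A 2 + C (b 1) * A 1 + C (g 1) * A 0 := hEs 0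
      have e2 : lam mμ (A 2) = 0 := hμA 1
      have e1 : lam mμ (A 1) = 0 := hμA 0
      rw [hE1, map_add, map_add, lam_C_mul, lam_C_mul, e2, e1, hμA0, hL1, hμA0]
      ring
    | (k + 2) =>
      have hE2 : X * A (k + 2) = A (k + 3) + C (b (k + 2)) * A (k + 2)
          + C (g (k + 2)) * A (k + 1) := hEs (k + 1)
      have e3 : lam mμ (A (k + 3)) = 0 := hμA (k + 2)
      have e2 : lam mμ (A (k + 2)) = 0 := hμA (k + 1)
      have e1 : lam mμ (A (k + 1)) = 0 := hμA k
      rw [hE2, map_add, map_add, lam_C_mul, lam_C_mul, e3, e2, e1, hLs (k + 1), e1]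
      ring
  have Bν : ∀ n, lam mν (X * A n) = b 1 * lam mν (A n) + g 2 * lam mν (Lop mν (A n)) := by
    intro n
    match n with
    | 0 =>
      rw [hb0, map_add, lam_C, hν0, hLopA0, map_zero, hνA0, hlam1]
      ring
    | 1 =>
      have hE1 : X * A 1 = A 2 + C (b 1) * A 1 + C (g 1) * A 0 := hEs 0
      rw [hE1, map_add, map_add, lam_C_mul, lam_C_mul, hlam2, hlam1, hνA0, hL1, hνA0]
      ring
    | (k + 2) =>
      have hE2 : X * A (k + 2) = A (k + 3) + C (b (k + 2)) * A (k + 2)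
          + C (g (k + 2)) * A (k + 1) := hEs (k + 1)
      have e3 : lam mν (A (k + 3)) = 0 := hlam3 (k + 1) (by omega)
      have hbk : b (k + 2) = b 1 := hbc (k + 1)
      have hgk : g (k + 2) = g 2 := hgc k
      rw [hE2, map_add, map_add, lam_C_mul, lam_C_mul, e3, hbk, hgk, hLs (k + 1)]
      ring
  -- extension to all polynomials
  have ext : ∀ (mρ : ℕ → ℝ) (a c : ℝ),
      (∀ n, lam mρ (X * A n) = a * lam mρ (A n) + c * lam mρ (Lop mν (A n))) →
      ∀ p, lam mρ (X * p) = a * lam mρ p + c * lam mρ (Lop mν p) := by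
    intro mρ a c hbasis p
    obtain ⟨co, hco⟩ := exists_expansion hmon hdeg p.natDegree p le_rfl
    rw [hco, Finset.mul_sum, map_sum, Lop_sum, map_sum, map_sum, Finset.mul_sum, Finset.mul_sum,
      ← Finset.sum_add_distrib]
    apply Finset.sum_congr rfl
    intro j _
    rw [show X * (C (co j) * A j) = C (co j) * (X * A j) by ring, lam_C_mul, Lop_smul,
      lam_C_mul, lam_C_mul, hbasis j]
    ring
  exact ⟨b 1, b0, g 2, g 1, hgpos 2, hgpos 1, ext mν (b 1) (g 2) Bν, ext mμ b0 (g 1) Bμ⟩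

end Dir1b

end OPX

theorem stmt10 (μ ν : Measure ℝ) [IsProbabilityMeasure μ] [IsProbabilityMeasure ν]
    (hcsμ : CompactSupp μ) (hcsν : CompactSupp ν) (hinf : (msupport μ).Infinite) :
    (∃ A : ℕ → Polynomial ℝ,
      (∀ n, (A n).Monic) ∧ (∀ n, (A n).natDegree = n) ∧
      (∀ n : ℕ, 1 ≤ n → Lop (mom ν) (A n) = A (n - 1)) ∧
      (∀ n m : ℕ, n ≠ m → ∫ x, (A n).eval x * (A m).eval x ∂μ = 0))
    ↔ ∃ (β' β : ℝ) (γ' γ : ℝ), 0 < γ' ∧ 0 < γ ∧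
        JacobiShift β' γ' (mom ν) (mom ν) ∧ JacobiShift β γ (mom ν) (mom μ) := by
  have hν0 : mom ν 0 = 1 := OPX.mom_zero ν
  have hμ0 : mom μ 0 = 1 := OPX.mom_zero μ
  have hbridge : ∀ p q : Polynomial ℝ,
      ∫ x, p.eval x * q.eval x ∂μ = OPX.lam (mom μ) (p * q) := by
    intro p q
    rw [← OPX.integral_poly μ hcsμ (p * q)]
    apply MeasureTheory.integral_congr_ae
    filter_upwards with x
    rw [Polynomial.eval_mul]
  constructor
  · rintro ⟨A, hmon, hdeg, hLop, horthI⟩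
    have horth : ∀ n m : ℕ, n ≠ m → OPX.lam (mom μ) (A n * A m) = 0 := by
      intro n m hne
      rw [← hbridge (A n) (A m)]
      exact horthI n m hne
    have hd : ∀ n, 0 < OPX.lam (mom μ) (A n * A n) := fun n =>
      OPX.lam_sq_pos μ hcsμ hinf (A n) (hmon n).ne_zero
    obtain ⟨β', β, γ', γ, hγ', hγ, Sν, Sμ⟩ :=
      OPX.forward_main hmon hdeg hLop horth hd hν0 hμ0
    exact ⟨β', β, γ', γ, hγ', hγ, (OPX.JS_iff (mom ν) (mom ν) β' γ').mpr Sν,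
      (OPX.JS_iff (mom ν) (mom μ) β γ).mpr Sμ⟩
  · rintro ⟨β', β, γ', γ, hγ', hγ, JSν, JSμ⟩
    have hSν := (OPX.JS_iff (mom ν) (mom ν) β' γ').mp JSν
    have hSμ := (OPX.JS_iff (mom ν) (mom μ) β γ).mp JSμ
    refine ⟨OPX.ASeq β β' γ γ', fun n => (OPX.ASeq_spec β β' γ γ' n).1,
      fun n => (OPX.ASeq_spec β β' γ γ' n).2, ?_, ?_⟩
    · intro n hn
      match n, hn with
      | (k + 1), _ =>
        rw [Nat.add_sub_cancel]
        exact OPX.LopASeq hν0 hSν k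
    · intro n m hne
      rw [hbridge]
      exact OPX.lam_ASeq_mul_ASeq hν0 hSν hμ0 hSμ n m hne
end

section
/- Let μ and ν be compactly supported probability measures on ℝ, β ∈ ℝ, γ > 0. Then the identity ∬ ∂f(x, y) dν(x) dμ(y) = γ^{−1} ∫ (x − β) f(x) dμ(x) holds for every continuously differentiable function f : ℝ → ℝ if and only if μ = Φ_{β,γ}[ν]. -/
open MeasureTheory

/-- The difference quotient `∂f(x,y)` of a function, with `(∂f)(x,x) = f'(x)`. -/
noncomputable def dqd (f : ℝ → ℝ) (x y : ℝ) : ℝ :=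
  if x = y then deriv f x else (f x - f y) / (x - y)

lemma dqd_pow (n : ℕ) (x y : ℝ) :
    dqd (fun t => t ^ n) x y = ∑ i ∈ Finset.range n, x ^ i * y ^ (n - 1 - i) := by
  unfold dqd
  split_ifs with h
  · subst h
    rw [deriv_pow_field]
    rw [Finset.sum_congr rfl (fun i hi => ?_), Finset.sum_const, Finset.card_range,
      nsmul_eq_mul]
    rw [← pow_add]
    congr 1
    have := Finset.mem_range.mp hi
    omega
  · rw [eq_comm, eq_div_iff (sub_ne_zero.mpr h), geom_sum₂_mul]

lemma dqd_add (f g : ℝ → ℝ) (hf : Differentiable ℝ f) (hg : Differentiable ℝ g) (x y : ℝ) :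
    dqd (fun t => f t + g t) x y = dqd f x y + dqd g x y := by
  unfold dqd
  split_ifs with h
  · exact deriv_add (hf x) (hg x)
  · rw [← add_div]; congr 1; ring

lemma dqd_const_mul (c : ℝ) (f : ℝ → ℝ) (hf : Differentiable ℝ f) (x y : ℝ) :
    dqd (fun t => c * f t) x y = c * dqd f x y := by
  unfold dqd
  split_ifs with h
  · exact deriv_const_mul c (hf x)
  · rw [← mul_div_assoc]; congr 1; ring

lemma dqd_finset_sum {ι : Type*} (s : Finset ι) (g : ι → ℝ → ℝ)
    (hg : ∀ i ∈ s, Differentiable ℝ (g i)) (x y : ℝ) :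
    dqd (fun t => ∑ i ∈ s, g i t) x y = ∑ i ∈ s, dqd (g i) x y := by
  unfold dqd
  split_ifs with h
  · exact deriv_fun_sum (fun i hi => (hg i hi).differentiableAt)
  · rw [← Finset.sum_div]; congr 1; rw [Finset.sum_sub_distrib]

lemma measurable_dqd (f : ℝ → ℝ) (hf : Continuous f) :
    Measurable fun p : ℝ × ℝ => dqd f p.1 p.2 := by
  unfold dqd
  apply Measurable.ite
  · exact measurableSet_eq_fun measurable_fst measurable_snd
  · exact (measurable_deriv f).comp measurable_fst
  · exact ((hf.measurable.comp measurable_fst).sub (hf.measurable.comp measurable_snd)).div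
      (measurable_fst.sub measurable_snd)

lemma exists_antideriv (P : Polynomial ℝ) : ∃ Q : Polynomial ℝ, Q.derivative = P := by
  induction P using Polynomial.induction_on' with
  | add p q hp hq =>
    obtain ⟨Qp, hQp⟩ := hp; obtain ⟨Qq, hQq⟩ := hq
    exact ⟨Qp + Qq, by simp [hQp, hQq]⟩
  | monomial n a =>
    refine ⟨Polynomial.C (a / (n + 1)) * Polynomial.X ^ (n + 1), ?_⟩
    rw [Polynomial.derivative_C_mul_X_pow]
    have h1 : ((n : ℝ) + 1) ≠ 0 := Nat.cast_add_one_ne_zero n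
    rw [← Polynomial.C_mul_X_pow_eq_monomial]
    push_cast
    congr 1
    field_simp

lemma integrable_of_bound {ρ : Measure ℝ} [IsFiniteMeasure ρ] {K : Set ℝ}
    (hρ : ∀ᵐ x ∂ρ, x ∈ K) {g : ℝ → ℝ} (hg : AEStronglyMeasurable g ρ) {C : ℝ}
    (hC : ∀ x ∈ K, |g x| ≤ C) : Integrable g ρ :=
  Integrable.mono' (integrable_const C) hg
    (hρ.mono fun x hx => by simpa [Real.norm_eq_abs] using hC x hx)

theorem stmt11 (μ ν : Measure ℝ) [IsProbabilityMeasure μ] [IsProbabilityMeasure ν]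
    (hcsμ : CompactSupp μ) (hcsν : CompactSupp ν) (β : ℝ) (γ : ℝ) (hγ : 0 < γ) :
    (∀ f : ℝ → ℝ, ContDiff ℝ 1 f →
      ∫ x, (∫ y, dqd f x y ∂μ) ∂ν = γ⁻¹ * ∫ x, (x - β) * f x ∂μ)
    ↔ JacobiShift β γ (mom ν) (mom μ) := by
  have hγ0 : γ ≠ 0 := ne_of_gt hγ
  -- set up common compact interval
  obtain ⟨Kμ, hKμc, hKμ0⟩ := hcsμ
  obtain ⟨Kν, hKνc, hKν0⟩ := hcsν
  obtain ⟨rμ, hrμ⟩ := hKμc.isBounded.subset_closedBall 0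
  obtain ⟨rν, hrν⟩ := hKνc.isBounded.subset_closedBall 0
  set R : ℝ := max 1 (max rμ rν) with hR
  have hR1 : (1 : ℝ) ≤ R := le_max_left _ _
  have hR0 : (0 : ℝ) < R := lt_of_lt_of_le one_pos hR1
  set I : Set ℝ := Set.Icc (-R) R with hI
  have habs : ∀ x ∈ I, |x| ≤ R := fun x hx => abs_le.mpr ⟨hx.1, hx.2⟩
  have hKμI : Kμ ⊆ I := fun x hx => by
    have := hrμ hx
    rw [Metric.mem_closedBall, Real.dist_eq, sub_zero] at this
    have : |x| ≤ R := le_trans this (le_trans (le_max_left _ _) (le_max_right _ _))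
    exact ⟨neg_le_of_abs_le this, le_of_abs_le this⟩
  have hKνI : Kν ⊆ I := fun x hx => by
    have := hrν hx
    rw [Metric.mem_closedBall, Real.dist_eq, sub_zero] at this
    have : |x| ≤ R := le_trans this (le_trans (le_max_right _ _) (le_max_right _ _))
    exact ⟨neg_le_of_abs_le this, le_of_abs_le this⟩
  have hmemμ : ∀ᵐ x ∂μ, x ∈ I :=
    mem_ae_iff.mpr (measure_mono_null (Set.compl_subset_compl.mpr hKμI) hKμ0)
  have hmemν : ∀ᵐ x ∂ν, x ∈ I :=
    mem_ae_iff.mpr (measure_mono_null (Set.compl_subset_compl.mpr hKνI) hKν0)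
  -- integrability of monomials
  have hIμ : ∀ k : ℕ, Integrable (fun y : ℝ => y ^ k) μ := fun k =>
    integrable_of_bound hmemμ ((continuous_pow k).measurable).aestronglyMeasurable
      (C := R ^ k) fun x hx => by
        rw [abs_pow]; exact pow_le_pow_left₀ (abs_nonneg x) (habs x hx) k
  have hIν : ∀ k : ℕ, Integrable (fun y : ℝ => y ^ k) ν := fun k =>
    integrable_of_bound hmemν ((continuous_pow k).measurable).aestronglyMeasurable
      (C := R ^ k) fun x hx => by
        rw [abs_pow]; exact pow_le_pow_left₀ (abs_nonneg x) (habs x hx) k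
  -- inner integral of dqd of a monomial
  have hIdqdpow : ∀ (k : ℕ) (x : ℝ), Integrable (fun y => dqd (fun t => t ^ k) x y) μ := by
    intro k x
    simp only [dqd_pow]
    exact integrable_finset_sum _ fun i _ => (hIμ _).const_mul _
  have hinner : ∀ (m : ℕ) (x : ℝ),
      ∫ y, dqd (fun t => t ^ m) x y ∂μ = ∑ i ∈ Finset.range m, x ^ i * mom μ (m - 1 - i) := by
    intro m x
    simp only [dqd_pow]
    rw [integral_finset_sum _ fun i _ => (hIμ (m - 1 - i)).const_mul (x ^ i)]
    exact Finset.sum_congr rfl fun i _ => integral_const_mul _ _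
  have houter : ∀ m : ℕ, ∫ x, (∫ y, dqd (fun t => t ^ m) x y ∂μ) ∂ν
      = ∑ i ∈ Finset.range m, mom ν i * mom μ (m - 1 - i) := by
    intro m
    simp only [hinner]
    rw [integral_finset_sum _ fun i _ => (hIν i).mul_const _]
    exact Finset.sum_congr rfl fun i _ => integral_mul_const _ _
  have hIq : ∀ k : ℕ, Integrable (fun x : ℝ => (x - β) * x ^ k) μ := by
    intro k
    have e : (fun x : ℝ => (x - β) * x ^ k) = fun x => x ^ (k + 1) - β * x ^ k :=
      funext fun x => by ring
    rw [e]; exact (hIμ (k + 1)).sub ((hIμ k).const_mul β)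
  have hRHS : ∀ m : ℕ, ∫ x, (x - β) * x ^ m ∂μ = mom μ (m + 1) - β * mom μ m := by
    intro m
    have e : (fun x : ℝ => (x - β) * x ^ m) = fun x => x ^ (m + 1) - β * x ^ m :=
      funext fun x => by ring
    rw [e, integral_sub (hIμ (m + 1)) ((hIμ m).const_mul β), integral_const_mul]
    rfl
  constructor
  · -- forward
    intro h n hn
    obtain ⟨m, rfl⟩ : ∃ m, n = m + 1 := ⟨n - 1, by omega⟩
    have h1 := h (fun t => t ^ m) (contDiff_id.pow m)
    rw [houter m, hRHS m] at h1
    have e1 : m + 1 - 1 = m := by omega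
    have e2 : ∀ i, m + 1 - 2 - i = m - 1 - i := fun i => by omega
    simp only [e1, e2]
    field_simp at h1
    linarith
  · -- backward
    intro hJ f hf
    have hS : ∀ k : ℕ, ∑ i ∈ Finset.range k, mom ν i * mom μ (k - 1 - i)
        = γ⁻¹ * (mom μ (k + 1) - β * mom μ k) := by
      intro k
      have h := hJ (k + 1) (by omega)
      have e1 : k + 1 - 1 = k := by omega
      have e2 : ∀ i, k + 1 - 2 - i = k - 1 - i := fun i => by omega
      simp only [e1, e2] at h
      field_simp
      linarith
    have hpoly : ∀ P : Polynomial ℝ,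
        ∫ x, (∫ y, dqd (fun t => P.eval t) x y ∂μ) ∂ν
          = γ⁻¹ * ∫ x, (x - β) * P.eval x ∂μ := by
      intro P
      set r := Finset.range (P.natDegree + 1) with hr
      have hfun : (fun t : ℝ => P.eval t) = fun t => ∑ k ∈ r, P.coeff k * t ^ k :=
        funext fun t => Polynomial.eval_eq_sum_range t
      have hdm : ∀ k ∈ r, Differentiable ℝ (fun t : ℝ => P.coeff k * t ^ k) :=
        fun k _ => (differentiable_pow k).const_mul _
      have hdqdP : ∀ x y : ℝ, dqd (fun t => P.eval t) x y
          = ∑ k ∈ r, P.coeff k * dqd (fun t => t ^ k) x y := by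
        intro x y
        rw [hfun, dqd_finset_sum _ _ hdm]
        exact Finset.sum_congr rfl fun k _ =>
          dqd_const_mul _ _ (differentiable_pow k) x y
      have hLin : ∀ x : ℝ, ∫ y, dqd (fun t => P.eval t) x y ∂μ
          = ∑ k ∈ r, P.coeff k * ∑ i ∈ Finset.range k, x ^ i * mom μ (k - 1 - i) := by
        intro x
        simp only [hdqdP]
        rw [integral_finset_sum _ fun k _ => (hIdqdpow k x).const_mul _]
        exact Finset.sum_congr rfl fun k _ => by rw [integral_const_mul, hinner]
      have hLHS : ∫ x, (∫ y, dqd (fun t => P.eval t) x y ∂μ) ∂ν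
          = ∑ k ∈ r, P.coeff k * ∑ i ∈ Finset.range k, mom ν i * mom μ (k - 1 - i) := by
        simp only [hLin]
        rw [integral_finset_sum]
        · refine Finset.sum_congr rfl fun k _ => ?_
          rw [integral_const_mul, integral_finset_sum _ fun i _ => (hIν i).mul_const _]
          congr 1
          exact Finset.sum_congr rfl fun i _ => integral_mul_const _ _
        · intro k _
          exact (integrable_finset_sum _ fun i _ => (hIν i).mul_const _).const_mul _
      have hR2 : ∫ x, (x - β) * P.eval x ∂μ
          = ∑ k ∈ r, P.coeff k * (mom μ (k + 1) - β * mom μ k) := by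
        have e : (fun x : ℝ => (x - β) * P.eval x)
            = fun x => ∑ k ∈ r, P.coeff k * ((x - β) * x ^ k) := by
          funext x
          rw [Polynomial.eval_eq_sum_range, Finset.mul_sum]
          exact Finset.sum_congr rfl fun k _ => by ring
        rw [e, integral_finset_sum _ fun k _ => (hIq k).const_mul _]
        exact Finset.sum_congr rfl fun k _ => by rw [integral_const_mul, hRHS]
      rw [hLHS, hR2, Finset.mul_sum]
      exact Finset.sum_congr rfl fun k _ => by rw [hS]; ring
    -- approximation step
    have hfd : Differentiable ℝ f := hf.differentiable one_ne_zero
    have hfc : Continuous f := hfd.continuous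
    have hmeasμ : ∀ (h : ℝ → ℝ), Continuous h → ∀ x : ℝ,
        AEStronglyMeasurable (fun y => dqd h x y) μ := fun h hh x =>
      ((measurable_dqd h hh).comp measurable_prodMk_left).aestronglyMeasurable
    have hIsec : ∀ (h : ℝ → ℝ), Continuous h → ∀ C : ℝ,
        (∀ x ∈ I, ∀ y ∈ I, |dqd h x y| ≤ C) → ∀ x ∈ I,
        Integrable (fun y => dqd h x y) μ := fun h hh C hC x hx =>
      integrable_of_bound hmemμ (hmeasμ h hh x) (fun y hy => hC x hx y hy)
    have houtint : ∀ (h : ℝ → ℝ), Continuous h → ∀ C : ℝ,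
        (∀ x ∈ I, ∀ y ∈ I, |dqd h x y| ≤ C) →
        Integrable (fun x => ∫ y, dqd h x y ∂μ) ν ∧
        |∫ x, (∫ y, dqd h x y ∂μ) ∂ν| ≤ C := by
      intro h hh C hC
      have hbnd : ∀ x ∈ I, |∫ y, dqd h x y ∂μ| ≤ C := by
        intro x hx
        have hb := norm_integral_le_of_norm_le_const (μ := μ)
          (f := fun y => dqd h x y) (C := C)
          (hmemμ.mono fun y hy => by simpa [Real.norm_eq_abs] using hC x hx y hy)
        simpa [Real.norm_eq_abs, measure_univ] using hb
      have hms : AEStronglyMeasurable (fun x => ∫ y, dqd h x y ∂μ) ν :=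
        ((measurable_dqd h hh).stronglyMeasurable.integral_prod_right').aestronglyMeasurable
      refine ⟨integrable_of_bound hmemν hms hbnd, ?_⟩
      have hb := norm_integral_le_of_norm_le_const (μ := ν)
        (f := fun x => ∫ y, dqd h x y ∂μ) (C := C)
        (hmemν.mono fun x hx => by simpa [Real.norm_eq_abs] using hbnd x hx)
      simpa [Real.norm_eq_abs, measure_univ] using hb
    have hdqd_bound : ∀ (h : ℝ → ℝ), Differentiable ℝ h → ∀ C : ℝ,
        (∀ x ∈ I, |deriv h x| ≤ C) → ∀ x ∈ I, ∀ y ∈ I, |dqd h x y| ≤ C := by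
      intro h hh C hC x hx y hy
      have hlip : ∀ a ∈ I, ∀ b ∈ I, |h b - h a| ≤ C * |b - a| := by
        intro a ha b hb
        have hl := Convex.norm_image_sub_le_of_norm_deriv_le (f := h) (s := I)
          (fun z _ => hh z) (fun z hz => by simpa [Real.norm_eq_abs] using hC z hz)
          (convex_Icc _ _) ha hb
        simpa [Real.norm_eq_abs] using hl
      unfold dqd
      split_ifs with hxy
      · subst hxy; exact hC x hx
      · rw [abs_div, div_le_iff₀ (abs_pos.mpr (sub_ne_zero.mpr hxy))]
        exact hlip y hy x hx
    set LHS := ∫ x, (∫ y, dqd f x y ∂μ) ∂ν with hLHSdef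
    set RHS := γ⁻¹ * ∫ x, (x - β) * f x ∂μ with hRHSdef
    have key : ∀ ε : ℝ, 0 < ε → |LHS - RHS| ≤ ε * (1 + γ⁻¹ * ((R + |β|) * R)) := by
      intro ε hε
      obtain ⟨P, hP⟩ := exists_polynomial_near_of_continuousOn (-R) R (deriv f)
        ((hf.continuous_deriv le_rfl).continuousOn) ε hε
      obtain ⟨Q₀, hQ₀⟩ := exists_antideriv P
      set Q : Polynomial ℝ := Q₀ + Polynomial.C (f 0 - Q₀.eval 0) with hQdef
      have hQder : Q.derivative = P := by simp [hQdef, hQ₀]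
      have hQd : Differentiable ℝ fun t : ℝ => Q.eval t := Q.differentiable
      set g : ℝ → ℝ := fun t => f t - Q.eval t with hgdef
      have hgd : Differentiable ℝ g := hfd.sub hQd
      have hcg : Continuous g := hgd.continuous
      have hg0 : g 0 = 0 := by simp [hgdef, hQdef]
      have hgderiv : ∀ x : ℝ, deriv g x = deriv f x - P.eval x := by
        intro x
        rw [hgdef, deriv_fun_sub (hfd x) (hQd x), Polynomial.deriv, hQder]
      have hgbound : ∀ x ∈ I, |deriv g x| ≤ ε := by
        intro x hx
        rw [hgderiv, abs_sub_comm]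
        exact le_of_lt (hP x hx)
      have hdqdg : ∀ x ∈ I, ∀ y ∈ I, |dqd g x y| ≤ ε := hdqd_bound g hgd ε hgbound
      have hfQ : ∀ x ∈ I, |f x - Q.eval x| ≤ ε * R := by
        intro x hx
        have h0I : (0 : ℝ) ∈ I := ⟨by linarith, le_of_lt hR0⟩
        have hlip := Convex.norm_image_sub_le_of_norm_deriv_le (f := g) (s := I)
          (fun z _ => hgd z) (fun z hz => by simpa [Real.norm_eq_abs] using hgbound z hz)
          (convex_Icc _ _) h0I hx
        rw [hg0, sub_zero, sub_zero, Real.norm_eq_abs, Real.norm_eq_abs] at hlip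
        calc |f x - Q.eval x| = |g x| := rfl
        _ ≤ ε * |x| := hlip
        _ ≤ ε * R := by nlinarith [habs x hx, abs_nonneg x]
      obtain ⟨CQ, hCQ⟩ := (isCompact_Icc (a := -R) (b := R)).exists_bound_of_continuousOn
        (Q.derivative.continuous).continuousOn
      have hdqdQ : ∀ x ∈ I, ∀ y ∈ I, |dqd (fun t => Q.eval t) x y| ≤ CQ :=
        hdqd_bound _ hQd CQ (fun x hx => by
          rw [Polynomial.deriv]
          simpa [Real.norm_eq_abs] using hCQ x hx)
      have hsplit : ∀ x y : ℝ, dqd f x y = dqd (fun t => Q.eval t) x y + dqd g x y := by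
        intro x y
        have hfe : f = fun t => Q.eval t + g t := funext fun t => by simp [hgdef]
        conv_lhs => rw [hfe]
        exact dqd_add _ _ hQd hgd x y
      have hinner_split : ∀ x ∈ I, ∫ y, dqd f x y ∂μ
          = ∫ y, dqd (fun t => Q.eval t) x y ∂μ + ∫ y, dqd g x y ∂μ := by
        intro x hx
        simp only [hsplit]
        exact integral_add (hIsec _ Q.continuous CQ hdqdQ x hx) (hIsec _ hcg ε hdqdg x hx)
      have hLHSsplit : LHS = (∫ x, (∫ y, dqd (fun t => Q.eval t) x y ∂μ) ∂ν)
          + ∫ x, (∫ y, dqd g x y ∂μ) ∂ν :=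
        calc LHS = ∫ x, (∫ y, dqd (fun t => Q.eval t) x y ∂μ + ∫ y, dqd g x y ∂μ) ∂ν :=
          integral_congr_ae (hmemν.mono fun x hx => hinner_split x hx)
        _ = _ := integral_add (houtint _ Q.continuous CQ hdqdQ).1 (houtint _ hcg ε hdqdg).1
      have hI1 : Integrable (fun x : ℝ => (x - β) * f x) μ := by
        obtain ⟨Cf, hCf⟩ := (isCompact_Icc (a := -R) (b := R)).exists_bound_of_continuousOn
          ((continuous_id.sub continuous_const).mul hfc).continuousOn
        exact integrable_of_bound hmemμ
          ((continuous_id.sub continuous_const).mul hfc).measurable.aestronglyMeasurable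
          (fun x hx => by have := hCf x hx; rwa [Real.norm_eq_abs] at this)
      have hI2 : Integrable (fun x : ℝ => (x - β) * Q.eval x) μ := by
        obtain ⟨Cf, hCf⟩ := (isCompact_Icc (a := -R) (b := R)).exists_bound_of_continuousOn
          ((continuous_id.sub continuous_const).mul Q.continuous).continuousOn
        exact integrable_of_bound hmemμ
          ((continuous_id.sub continuous_const).mul Q.continuous).measurable.aestronglyMeasurable
          (fun x hx => by have := hCf x hx; rwa [Real.norm_eq_abs] at this)
      have hdiff : |∫ x, (x - β) * Q.eval x ∂μ - ∫ x, (x - β) * f x ∂μ|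
          ≤ (R + |β|) * (ε * R) := by
        rw [← integral_sub hI2 hI1]
        have hptw : ∀ x ∈ I, |(x - β) * Q.eval x - (x - β) * f x| ≤ (R + |β|) * (ε * R) := by
          intro x hx
          obtain ⟨hx1, hx2⟩ := abs_le.mp (habs x hx)
          have hβ1 := le_abs_self β
          have hβ2 := neg_abs_le β
          have h1 : |x - β| ≤ R + |β| := abs_le.mpr ⟨by linarith, by linarith⟩
          have heq1 : |(x - β) * Q.eval x - (x - β) * f x| = |x - β| * |f x - Q.eval x| := by
            have he2 : (x - β) * Q.eval x - (x - β) * f x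
                = -((x - β) * (f x - Q.eval x)) := by ring
            rw [he2, abs_neg, abs_mul]
          rw [heq1]
          exact mul_le_mul h1 (hfQ x hx) (abs_nonneg _) (by positivity)
        have hb := norm_integral_le_of_norm_le_const (μ := μ)
          (f := fun x => (x - β) * Q.eval x - (x - β) * f x)
          (hmemμ.mono fun x hx => by
            rw [Real.norm_eq_abs]; exact hptw x hx)
        rw [Real.norm_eq_abs, probReal_univ, mul_one] at hb
        exact hb
      have hgsmall := (houtint g hcg ε hdqdg).2
      have hQid := hpoly Q
      have hstep : LHS - RHS = (∫ x, (∫ y, dqd g x y ∂μ) ∂ν)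
          + γ⁻¹ * ((∫ x, (x - β) * Q.eval x ∂μ) - ∫ x, (x - β) * f x ∂μ) := by
        rw [hLHSsplit, hQid, hRHSdef]; ring
      have hstep2 : |LHS - RHS| ≤ |∫ x, (∫ y, dqd g x y ∂μ) ∂ν|
          + |γ⁻¹ * ((∫ x, (x - β) * Q.eval x ∂μ) - ∫ x, (x - β) * f x ∂μ)| := by
        rw [hstep]; exact abs_add_le _ _
      have hstep3 : |γ⁻¹ * ((∫ x, (x - β) * Q.eval x ∂μ) - ∫ x, (x - β) * f x ∂μ)|
          ≤ γ⁻¹ * ((R + |β|) * (ε * R)) := by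
        rw [abs_mul, abs_of_nonneg (inv_nonneg.mpr hγ.le)]
        exact mul_le_mul_of_nonneg_left hdiff (inv_nonneg.mpr hγ.le)
      have hfin : ε + γ⁻¹ * ((R + |β|) * (ε * R))
          = ε * (1 + γ⁻¹ * ((R + |β|) * R)) := by ring
      linarith
    -- conclude
    have habs0 : LHS - RHS = 0 := by
      by_contra hne
      have hpos : 0 < |LHS - RHS| := abs_pos.mpr hne
      set Ct : ℝ := 1 + γ⁻¹ * ((R + |β|) * R) with hCt
      have hCt0 : 0 < Ct := by
        rw [hCt]
        have h1 : 0 ≤ γ⁻¹ * ((R + |β|) * R) := by positivity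
        linarith
      have hk := key (|LHS - RHS| / (2 * Ct)) (by positivity)
      have he : |LHS - RHS| / (2 * Ct) * Ct = |LHS - RHS| / 2 := by
        field_simp
      rw [he] at hk
      linarith
    linarith [habs0]
end
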